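/- arXiv:1406.6674 — 8 statements merged into one kernel-verified Lean document; each statement's English description precedes it below -/
import Mathlib

section
/- The elements π_o, as o ranges over all orbits of the multiplication action of ⟨p⟩ on ℤ/dℤ, form a complete system of orthogonal idempotents in the group algebra W[H]: π_o² = π_o for every orbit o, π_o·π_{o'} = 0 whenever o ≠ o', and ∑_o π_o = 1. Moreover every coefficient of each π_o lies in the image of ℤ_p in W, and for each orbit o the ℤ_p-module Γ_o := π_o·ℤ_p[H] (the image under multiplication by π_o of the ℤ_p-span of H inside W[H]) is a free ℤ_p-module of rank |o|. -/
open scoped Classical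

noncomputable section

instance padicIntAlgebraWitt (p : ℕ) [Fact p.Prime] (K : Type*) [CommRing K]
    [Algebra (ZMod p) K] : Algebra ℤ_[p] (WittVector p K) :=
  ((WittVector.map (algebraMap (ZMod p) K)).comp
    (WittVector.equiv p).symm.toRingHom).toAlgebra

/-- The orbit of `i ∈ ℤ/dℤ` under multiplication by `p` (as a finite set). -/
def orb (p d : ℕ) [NeZero d] (i : ZMod d) : Finset (ZMod d) :=
  Finset.image (fun j : ℕ => (p : ZMod d) ^ j * i) (Finset.range d)

/-- The set of all orbits of the multiplication action of `⟨p⟩` on `ℤ/dℤ`. -/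
def orbitsAll (p d : ℕ) [NeZero d] : Finset (Finset (ZMod d)) :=
  Finset.image (orb p d) Finset.univ

/-- The idempotent `π_o = d⁻¹·∑_{h ∈ H} (∑_{i ∈ o} τ(χ(h))^(−i))·h` in the group
algebra `W[H]`, where `τ` is the Teichmüller lift and `χ : H → k̄ˣ` is an injective
character; here `τ(χ(h))^(−i) = τ((χ(h)⁻¹)^(i.val))`, which is well defined since
`τ(χ(h))^d = 1`. -/
def piIdem (p d : ℕ) [Fact p.Prime] [NeZero d] {H : Type} [CommGroup H] [Fintype H]
    (χ : H →* (AlgebraicClosure (ZMod p))ˣ) (o : Finset (ZMod d)) :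
    MonoidAlgebra (WittVector p (AlgebraicClosure (ZMod p))) H :=
  ∑ h : H, MonoidAlgebra.single h
    (Ring.inverse (d : WittVector p (AlgebraicClosure (ZMod p))) *
      ∑ i ∈ o, WittVector.teichmuller p
        ((((χ h)⁻¹ ^ i.val : (AlgebraicClosure (ZMod p))ˣ) : AlgebraicClosure (ZMod p))))


section AuxGen

variable {M : Type*} [Monoid M]

theorem aux_pow_mod {u : M} {d : ℕ} (hu : u ^ d = 1) (n : ℕ) : u ^ (n % d) = u ^ n := by
  conv_rhs => rw [← Nat.mod_add_div n d]
  rw [pow_add, pow_mul, hu, one_pow, mul_one]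

theorem aux_pow_eq_of_modeq {u : M} {d : ℕ} (hu : u ^ d = 1) {m n : ℕ}
    (h : m ≡ n [MOD d]) : u ^ m = u ^ n := by
  rw [← aux_pow_mod hu m, ← aux_pow_mod hu n, show m % d = n % d from h]

end AuxGen

section AuxWitt

variable (p : ℕ) [Fact p.Prime]

local notation "K'" => AlgebraicClosure (ZMod p)
local notation "W'" => WittVector p K'

theorem aux_charK : CharP K' p := inferInstance

theorem aux_algebraMap_eq :
    algebraMap ℤ_[p] W' = (WittVector.map (algebraMap (ZMod p) K')).comp
      (WittVector.equiv p).symm.toRingHom :=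
  RingHom.algebraMap_toAlgebra _

theorem aux_algebraMap_inj : Function.Injective (algebraMap ℤ_[p] W') := by
  rw [aux_algebraMap_eq]
  rw [RingHom.coe_comp]
  exact (WittVector.map_injective _ (algebraMap (ZMod p) K').injective).comp
    (WittVector.equiv p).symm.injective

theorem aux_frobenius_teichmuller (x : K') :
    WittVector.frobenius (WittVector.teichmuller p x) = WittVector.teichmuller p x ^ p := by
  have h : (WittVector.teichmuller p x : W') ^ p = WittVector.teichmuller p (x ^ p) := by
    rw [← map_pow]
  rw [h]
  ext n
  rw [WittVector.coeff_frobenius_charP]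
  cases n with
  | zero => rw [WittVector.teichmuller_coeff_zero, WittVector.teichmuller_coeff_zero]
  | succ n =>
      rw [WittVector.teichmuller_coeff_pos p _ _ (Nat.succ_pos n),
        WittVector.teichmuller_coeff_pos p _ _ (Nat.succ_pos n), zero_pow]
      exact (Fact.out : p.Prime).ne_zero

theorem aux_exists_zmod {L : Type*} [Field L] [Algebra (ZMod p) L] (a : L)
    (ha : a ^ p = a) : ∃ b : ZMod p, algebraMap (ZMod p) L b = a := by
  classical
  set f := algebraMap (ZMod p) L with hfdef
  have hf : Function.Injective f := f.injective
  by_contra h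
  push_neg at h
  set q : Polynomial L := Polynomial.X ^ p - Polynomial.X with hq
  have hp2 : 1 < p := (Fact.out : p.Prime).one_lt
  have hdeg : q.degree = p := by
    have hlt : (Polynomial.X : Polynomial L).degree < (Polynomial.X ^ p : Polynomial L).degree := by
      rw [Polynomial.degree_X, Polynomial.degree_X_pow]
      exact_mod_cast hp2
    rw [hq, Polynomial.degree_sub_eq_left_of_degree_lt hlt, Polynomial.degree_X_pow]
  have hq0 : q ≠ 0 := by
    intro h0
    rw [h0, Polynomial.degree_zero] at hdeg
    exact (by simp : (⊥ : WithBot ℕ) ≠ (p : WithBot ℕ)) hdeg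
  have hnat : q.natDegree = p := Polynomial.natDegree_eq_of_degree_eq_some hdeg
  have hroot : ∀ c : L, c ^ p = c → c ∈ q.roots.toFinset := by
    intro c hc
    rw [Multiset.mem_toFinset, Polynomial.mem_roots hq0]
    simp [hq, Polynomial.IsRoot, sub_eq_zero, hc]
  set s : Finset L := insert a (Finset.univ.image f) with hs
  have hnotmem : a ∉ Finset.univ.image f := by
    intro hmem
    rcases Finset.mem_image.mp hmem with ⟨b, _, hb⟩
    exact h b hb
  have hcard : s.card = p + 1 := by
    rw [hs, Finset.card_insert_of_notMem hnotmem,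
      Finset.card_image_of_injective _ hf, Finset.card_univ, ZMod.card]
  have hsub : s ⊆ q.roots.toFinset := by
    intro c hc
    rcases Finset.mem_insert.mp hc with rfl | hc
    · exact hroot c ha
    · rcases Finset.mem_image.mp hc with ⟨b, _, rfl⟩
      exact hroot _ (by rw [← map_pow, ZMod.pow_card])
  have h1 := Finset.card_le_card hsub
  have h2 : q.roots.toFinset.card ≤ p := le_trans (q.roots.toFinset_card_le)
    (hnat ▸ Polynomial.card_roots' q)
  omega

theorem aux_mem_range_of_frob (x : W') (hx : WittVector.frobenius x = x) :
    x ∈ (algebraMap ℤ_[p] W').range := by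
  have hcoeff : ∀ n, ∃ b : ZMod p, algebraMap (ZMod p) K' b = x.coeff n := by
    intro n
    apply aux_exists_zmod
    conv_rhs => rw [← hx]
    rw [WittVector.coeff_frobenius_charP]
  choose b hb using hcoeff
  refine ⟨(WittVector.equiv p) (WittVector.mk p b), ?_⟩
  rw [aux_algebraMap_eq]
  simp only [RingHom.comp_apply, RingEquiv.toRingHom_eq_coe, RingHom.coe_coe,
    RingEquiv.symm_apply_apply]
  ext n
  rw [WittVector.map_coeff, WittVector.coeff_mk]
  exact hb n

theorem aux_isUnit_d_zp (d : ℕ) (hpd : ¬ p ∣ d) : IsUnit (d : ℤ_[p]) := by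
  by_contra h
  rw [PadicInt.not_isUnit_iff] at h
  have hcast : ((d : ℤ) : ℤ_[p]) = (d : ℤ_[p]) := by push_cast; ring
  rw [← hcast, PadicInt.norm_int_lt_one_iff_dvd] at h
  exact hpd (by exact_mod_cast h)

theorem aux_isUnit_d (d : ℕ) (hpd : ¬ p ∣ d) : IsUnit (d : W') := by
  have := (aux_isUnit_d_zp p d hpd).map (algebraMap ℤ_[p] W')
  rwa [map_natCast] at this

theorem aux_inverse_d_mem (d : ℕ) (hpd : ¬ p ∣ d) :
    Ring.inverse (d : W') ∈ (algebraMap ℤ_[p] W').range := by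
  obtain ⟨v, hv⟩ := aux_isUnit_d_zp p d hpd
  refine ⟨Ring.inverse (d : ℤ_[p]), ?_⟩
  have h1 : (d : W') = algebraMap ℤ_[p] W' (d : ℤ_[p]) := (map_natCast _ d).symm
  rw [← hv, Ring.inverse_unit, h1, ← hv]
  have : algebraMap ℤ_[p] W' ↑v = ↑(Units.map (algebraMap ℤ_[p] W' : ℤ_[p] →* W') v) := rfl
  rw [this, Ring.inverse_unit]
  rfl

end AuxWitt


abbrev KK (p : ℕ) [Fact p.Prime] : Type := AlgebraicClosure (ZMod p)
abbrev WW (p : ℕ) [Fact p.Prime] : Type := WittVector p (KK p)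

section AuxChar

variable (p d : ℕ) [Fact p.Prime] [NeZero d] {H : Type} [CommGroup H] [Fintype H]

variable (χ : H →* (KK p)ˣ)

/-- The unit `τ((χ h)⁻¹)` in `W`. -/
def auxU (h : H) : (WW p)ˣ := Units.map (WittVector.teichmuller p) ((χ h)⁻¹)

/-- `ζ h = τ((χ h)⁻¹) : W`. -/
def auxZeta (h : H) : WW p := WittVector.teichmuller p (((χ h)⁻¹ : (KK p)ˣ) : KK p)

theorem auxZeta_eq_val (h : H) : auxZeta p χ h = ((auxU p χ h : (WW p)ˣ) : WW p) := rfl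

theorem teichmuller_injective :
    Function.Injective (WittVector.teichmuller p : KK p →* WW p) := by
  intro a b hab
  have := congrArg (fun z : WW p => z.coeff 0) hab
  simpa [WittVector.teichmuller_coeff_zero] using this

theorem auxZeta_mul (g h : H) : auxZeta p χ (g * h) = auxZeta p χ g * auxZeta p χ h := by
  simp only [auxZeta, mul_inv, Units.val_mul, map_mul]

theorem auxZeta_one : auxZeta p χ 1 = 1 := by
  simp [auxZeta]

theorem auxZeta_inv_mul (h : H) : auxZeta p χ h⁻¹ * auxZeta p χ h = 1 := by
  rw [← auxZeta_mul, inv_mul_cancel, auxZeta_one]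

variable {d} in
theorem auxZeta_pow_d (hcard : Fintype.card H = d) (h : H) : auxZeta p χ h ^ d = 1 := by
  have h1 : ((χ h)⁻¹ : (KK p)ˣ) ^ d = 1 := by
    rw [← map_inv, ← map_pow, ← hcard, pow_card_eq_one, map_one]
  rw [auxZeta, ← map_pow, ← Units.val_pow_eq_pow_val, h1, Units.val_one, map_one]

theorem auxZeta_ne_one (hχ : Function.Injective χ) (h : H) (hne : h ≠ 1) :
    auxZeta p χ h ≠ 1 := by
  intro hone
  have h1 : ((((χ h)⁻¹ : (KK p)ˣ)) : KK p) = ((1 : (KK p)ˣ) : KK p) := by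
    apply teichmuller_injective p
    rw [show ((WittVector.teichmuller p) (((χ h)⁻¹ : (KK p)ˣ) : KK p) : WW p) = 1 from hone]
    simp
  have h2 : (χ h)⁻¹ = 1 := Units.ext h1
  exact hne (hχ (by rw [inv_eq_one.mp h2, map_one]))

variable {d} in
theorem auxU_orderOf (hχ : Function.Injective χ) (hcard : Fintype.card H = d)
    (h : H) (hgen : ∀ x : H, x ∈ Subgroup.zpowers h) : orderOf (auxU p χ h) = d := by
  have hτ : Function.Injective (Units.map (WittVector.teichmuller p : KK p →* WW p)) :=
    Units.map_injective (teichmuller_injective p)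
  rw [auxU, orderOf_injective _ hτ, orderOf_inv, orderOf_injective χ hχ,
    orderOf_eq_card_of_forall_mem_zpowers hgen, Nat.card_eq_fintype_card, hcard]

variable {d} in
theorem auxZeta_pow_inj (hχ : Function.Injective χ) (hcard : Fintype.card H = d)
    (h : H) (hgen : ∀ x : H, x ∈ Subgroup.zpowers h) (i j : ZMod d)
    (hij : auxZeta p χ h ^ i.val = auxZeta p χ h ^ j.val) : i = j := by
  have hu : (auxU p χ h) ^ i.val = (auxU p χ h) ^ j.val := by
    apply Units.ext
    simpa [auxZeta_eq_val, Units.val_pow_eq_pow_val] using hij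
  have hmod := pow_eq_pow_iff_modEq.mp hu
  rw [auxU_orderOf p χ hχ hcard h hgen] at hmod
  apply ZMod.val_injective
  have hi := ZMod.val_lt i
  have hj := ZMod.val_lt j
  have := hmod
  unfold Nat.ModEq at this
  rw [Nat.mod_eq_of_lt hi, Nat.mod_eq_of_lt hj] at this
  exact this

/-- first character sum: over the group. -/
theorem aux_sum_H (hcyc : IsCyclic H) (hcard : Fintype.card H = d)
    (hχ : Function.Injective χ) (i j : ZMod d) :
    ∑ h : H, auxZeta p χ h ^ i.val * auxZeta p χ h⁻¹ ^ j.val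
      = if i = j then (d : WW p) else 0 := by
  rcases eq_or_ne i j with rfl | hij
  · rw [if_pos rfl]
    have : ∀ h : H, auxZeta p χ h ^ i.val * auxZeta p χ h⁻¹ ^ i.val = 1 := by
      intro h
      rw [← mul_pow, mul_comm (auxZeta p χ h), auxZeta_inv_mul, one_pow]
    rw [Finset.sum_congr rfl fun h _ => this h]
    simp [hcard]
  · rw [if_neg hij]
    obtain ⟨h₀, hgen⟩ := hcyc.exists_generator
    set S := ∑ h : H, auxZeta p χ h ^ i.val * auxZeta p χ h⁻¹ ^ j.val with hS
    set A := auxZeta p χ h₀ ^ i.val * auxZeta p χ h₀⁻¹ ^ j.val with hA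
    have hshift : S = A * S := by
      rw [hS, Finset.mul_sum]
      exact (Equiv.sum_comp (Equiv.mulLeft h₀)
        (fun h => auxZeta p χ h ^ i.val * auxZeta p χ h⁻¹ ^ j.val)).symm.trans
        (Finset.sum_congr rfl fun h _ => by
          simp only [Equiv.coe_mulLeft, mul_inv]
          rw [auxZeta_mul, auxZeta_mul, mul_pow, mul_pow, hA]
          ring)
    have hAne : A ≠ 1 := by
      intro hA1
      apply hij
      apply auxZeta_pow_inj p χ hχ hcard h₀ hgen
      have := congrArg (fun z => z * auxZeta p χ h₀ ^ j.val) hA1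
      simp only [one_mul] at this
      rw [mul_assoc, ← mul_pow, auxZeta_inv_mul, one_pow, mul_one] at this
      exact this
    have hz : (A - 1) * S = 0 := by rw [sub_mul, one_mul, ← hshift, sub_self]
    rcases mul_eq_zero.mp hz with h1 | h2
    · exact absurd (by linear_combination h1 : A = 1) hAne
    · exact h2

/-- second character sum: over `ZMod d`. -/
theorem aux_sum_ZMod (hcard : Fintype.card H = d) (hχ : Function.Injective χ) (h : H) :
    ∑ i : ZMod d, auxZeta p χ h ^ (i : ZMod d).val = if h = 1 then (d : WW p) else 0 := by
  rcases eq_or_ne h 1 with rfl | hne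
  · rw [if_pos rfl]
    simp [auxZeta_one, Finset.card_univ, ZMod.card]
  · rw [if_neg hne]
    have hud : auxZeta p χ h ^ d = 1 := auxZeta_pow_d p χ hcard h
    set S := ∑ i : ZMod d, auxZeta p χ h ^ (i : ZMod d).val with hS
    have hshift : S = auxZeta p χ h * S := by
      rw [hS, Finset.mul_sum]
      refine (Equiv.sum_comp (Equiv.addRight (1 : ZMod d))
        (fun i : ZMod d => auxZeta p χ h ^ i.val)).symm.trans
        (Finset.sum_congr rfl fun i _ => ?_)
      simp only [Equiv.coe_addRight]
      have hmod : (i + 1 : ZMod d).val ≡ i.val + 1 [MOD d] := by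
        have h1 : (i + 1 : ZMod d).val = (i.val + (1 : ZMod d).val) % d := ZMod.val_add i 1
        have h2 : (1 : ZMod d).val = 1 % d := ZMod.val_one_eq_one_mod d
        rw [h1, h2]
        calc (i.val + 1 % d) % d ≡ i.val + 1 % d [MOD d] := Nat.mod_modEq _ d
          _ ≡ i.val + 1 [MOD d] := Nat.ModEq.add_left _ (Nat.mod_modEq 1 d)
      rw [aux_pow_eq_of_modeq hud hmod, pow_succ]
      ring
    have hz : (auxZeta p χ h - 1) * S = 0 := by
      rw [sub_mul, one_mul, ← hshift, sub_self]
    rcases mul_eq_zero.mp hz with h1 | h2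
    · exact absurd (by linear_combination h1 : auxZeta p χ h = 1)
        (auxZeta_ne_one p χ hχ h hne)
    · exact h2

end AuxChar


section AuxOrb

variable (p d : ℕ) [Fact p.Prime] [NeZero d]

theorem aux_coe_u (hpd : ¬ p ∣ d) :
    ((ZMod.unitOfCoprime p (((Fact.out : p.Prime).coprime_iff_not_dvd).mpr hpd) :
      (ZMod d)ˣ) : ZMod d) = (p : ZMod d) :=
  ZMod.coe_unitOfCoprime p _

theorem aux_mem_orb_iff (hpd : ¬ p ∣ d) (i x : ZMod d) :
    x ∈ orb p d i ↔ ∃ n : ℕ, x = (p : ZMod d) ^ n * i := by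
  set u : (ZMod d)ˣ := ZMod.unitOfCoprime p (((Fact.out : p.Prime).coprime_iff_not_dvd).mpr hpd)
    with hu
  constructor
  · rintro hx
    rcases Finset.mem_image.mp hx with ⟨j, _, rfl⟩
    exact ⟨j, rfl⟩
  · rintro ⟨n, rfl⟩
    set k := orderOf u with hk
    have hk1 : 0 < k := orderOf_pos u
    have hkd : k ≤ d := by
      calc k ≤ Fintype.card (ZMod d)ˣ := orderOf_le_card_univ
        _ ≤ Fintype.card (ZMod d) :=
          Fintype.card_le_of_injective (fun v : (ZMod d)ˣ => (v : ZMod d))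
            (fun a b hab => Units.ext hab)
        _ = d := ZMod.card d
    have hpow : (p : ZMod d) ^ n = (p : ZMod d) ^ (n % k) := by
      rw [← aux_coe_u p d hpd, ← hu, ← Units.val_pow_eq_pow_val, ← Units.val_pow_eq_pow_val,
        aux_pow_mod (pow_orderOf_eq_one u) n]
    refine Finset.mem_image.mpr ⟨n % k, Finset.mem_range.mpr (lt_of_lt_of_le
      (Nat.mod_lt n hk1) hkd), ?_⟩
    rw [← hpow]

theorem aux_mem_orb_self (hpd : ¬ p ∣ d) (i : ZMod d) : i ∈ orb p d i :=
  (aux_mem_orb_iff p d hpd i i).mpr ⟨0, by rw [pow_zero, one_mul]⟩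

theorem aux_orb_eq_of_mem (hpd : ¬ p ∣ d) {i x : ZMod d} (hx : x ∈ orb p d i) :
    orb p d x = orb p d i := by
  rcases (aux_mem_orb_iff p d hpd i x).mp hx with ⟨n, rfl⟩
  set u : (ZMod d)ˣ := ZMod.unitOfCoprime p (((Fact.out : p.Prime).coprime_iff_not_dvd).mpr hpd)
    with hu
  set k := orderOf u with hk
  have hk1 : 0 < k := orderOf_pos u
  have hukn : (p : ZMod d) ^ (n * k) = 1 := by
    rw [← aux_coe_u p d hpd, ← hu, ← Units.val_pow_eq_pow_val, mul_comm n k, pow_mul,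
      pow_orderOf_eq_one, one_pow, Units.val_one]
  have hi : (p : ZMod d) ^ (n * (k - 1)) * ((p : ZMod d) ^ n * i) = i := by
    rw [← mul_assoc, ← pow_add]
    have : n * (k - 1) + n = n * k := by
      obtain ⟨m, hm⟩ : ∃ m, k = m + 1 := ⟨k - 1, by omega⟩
      rw [hm]
      simp [Nat.mul_succ]
    rw [this, hukn, one_mul]
  ext y
  rw [aux_mem_orb_iff p d hpd, aux_mem_orb_iff p d hpd]
  constructor
  · rintro ⟨m, rfl⟩
    exact ⟨m + n, by rw [pow_add, mul_assoc]⟩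
  · rintro ⟨m, rfl⟩
    refine ⟨m + n * (k - 1), ?_⟩
    rw [pow_add, mul_assoc, hi]

theorem aux_mul_p_mem (hpd : ¬ p ∣ d) {i x : ZMod d} (hx : x ∈ orb p d i) :
    (p : ZMod d) * x ∈ orb p d i := by
  rcases (aux_mem_orb_iff p d hpd i x).mp hx with ⟨n, rfl⟩
  exact (aux_mem_orb_iff p d hpd i _).mpr ⟨n + 1, by rw [pow_succ]; ring⟩

theorem aux_image_mul_p (hpd : ¬ p ∣ d) (i : ZMod d) :
    Finset.image (fun x => (p : ZMod d) * x) (orb p d i) = orb p d i := by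
  have hinj : Function.Injective (fun x : ZMod d => (p : ZMod d) * x) := by
    intro a b hab
    have hu := aux_coe_u p d hpd
    rw [← hu] at hab
    exact (Units.mul_right_inj _).mp hab
  apply Finset.eq_of_subset_of_card_le
  · intro y hy
    rcases Finset.mem_image.mp hy with ⟨x, hx, rfl⟩
    exact aux_mul_p_mem p d hpd hx
  · rw [Finset.card_image_of_injective _ hinj]

theorem aux_mem_orbitsAll (i : ZMod d) : orb p d i ∈ orbitsAll p d :=
  Finset.mem_image.mpr ⟨i, Finset.mem_univ i, rfl⟩

theorem aux_mem_iff_orb_eq (hpd : ¬ p ∣ d) {o : Finset (ZMod d)} (ho : o ∈ orbitsAll p d)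
    (i : ZMod d) : i ∈ o ↔ orb p d i = o := by
  rcases Finset.mem_image.mp ho with ⟨j, _, rfl⟩
  constructor
  · exact fun h => aux_orb_eq_of_mem p d hpd h
  · intro h
    rw [← h]
    exact aux_mem_orb_self p d hpd i

theorem aux_orbits_disjoint (hpd : ¬ p ∣ d) {o o' : Finset (ZMod d)}
    (ho : o ∈ orbitsAll p d) (ho' : o' ∈ orbitsAll p d) (hne : o ≠ o') :
    ∀ i ∈ o, ∀ j ∈ o', i ≠ j := by
  intro i hi j hj hij
  subst hij
  exact hne (((aux_mem_iff_orb_eq p d hpd ho i).mp hi).symm.trans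
    ((aux_mem_iff_orb_eq p d hpd ho' i).mp hj))

end AuxOrb

theorem aux_single_sum {k G α : Type*} [Semiring k] (g : G) (s : Finset α) (f : α → k) :
    MonoidAlgebra.single g (∑ a ∈ s, f a) = ∑ a ∈ s, MonoidAlgebra.single g (f a) :=
  map_sum (MonoidAlgebra.singleAddHom g) f s

section AuxE

variable (p d : ℕ) [Fact p.Prime] [NeZero d] {H : Type} [CommGroup H] [Fintype H]
variable (χ : H →* (KK p)ˣ)

/-- The elementary idempotent `e_i`. -/
def auxE (i : ZMod d) : MonoidAlgebra (WW p) H :=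
  ∑ h : H, MonoidAlgebra.single h (Ring.inverse (d : WW p) * auxZeta p χ h ^ i.val)

theorem aux_teich_eq (h : H) (i : ZMod d) :
    WittVector.teichmuller p ((((χ h)⁻¹ ^ i.val : (KK p)ˣ) : KK p)) = auxZeta p χ h ^ i.val := by
  rw [Units.val_pow_eq_pow_val, map_pow, auxZeta]

theorem aux_piIdem_eq (o : Finset (ZMod d)) :
    piIdem p d χ o = ∑ i ∈ o, auxE p d χ i := by
  unfold piIdem auxE
  rw [Finset.sum_comm]
  refine Finset.sum_congr rfl fun h _ => ?_
  rw [show (∑ i ∈ o, WittVector.teichmuller p ((((χ h)⁻¹ ^ i.val : (KK p)ˣ) : KK p)))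
      = ∑ i ∈ o, auxZeta p χ h ^ i.val from Finset.sum_congr rfl fun i _ => aux_teich_eq p d χ h i,
    Finset.mul_sum, aux_single_sum]

theorem auxE_mul (hpd : ¬ p ∣ d) (hcyc : IsCyclic H) (hcard : Fintype.card H = d)
    (hχ : Function.Injective χ) (i j : ZMod d) :
    auxE p d χ i * auxE p d χ j = if i = j then auxE p d χ j else 0 := by
  have hD : IsUnit (d : WW p) := aux_isUnit_d p d hpd
  set D := Ring.inverse (d : WW p) with hDdef
  have step : auxE p d χ i * auxE p d χ j = ∑ g : H, MonoidAlgebra.single g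
      ((D * D * auxZeta p χ g ^ j.val) *
        ∑ h : H, auxZeta p χ h ^ i.val * auxZeta p χ h⁻¹ ^ j.val) := by
    calc auxE p d χ i * auxE p d χ j
        = ∑ h : H, ∑ h' : H, MonoidAlgebra.single (h * h')
            ((D * auxZeta p χ h ^ i.val) * (D * auxZeta p χ h' ^ j.val)) := by
          rw [auxE, auxE, Finset.sum_mul_sum]
          simp only [MonoidAlgebra.single_mul_single]
          rfl
      _ = ∑ h : H, ∑ g : H, MonoidAlgebra.single g
            ((D * auxZeta p χ h ^ i.val) * (D * auxZeta p χ (h⁻¹ * g) ^ j.val)) := by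
          refine Finset.sum_congr rfl fun h _ => ?_
          rw [← Equiv.sum_comp (Equiv.mulLeft h) (fun g => MonoidAlgebra.single g
            ((D * auxZeta p χ h ^ i.val) * (D * auxZeta p χ (h⁻¹ * g) ^ j.val)))]
          refine Finset.sum_congr rfl fun h' _ => ?_
          simp only [Equiv.coe_mulLeft, inv_mul_cancel_left]
      _ = ∑ g : H, ∑ h : H, MonoidAlgebra.single g
            ((D * auxZeta p χ h ^ i.val) * (D * auxZeta p χ (h⁻¹ * g) ^ j.val)) :=
          Finset.sum_comm
      _ = ∑ g : H, MonoidAlgebra.single g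
            ((D * D * auxZeta p χ g ^ j.val) *
              ∑ h : H, auxZeta p χ h ^ i.val * auxZeta p χ h⁻¹ ^ j.val) := by
          refine Finset.sum_congr rfl fun g _ => ?_
          rw [← aux_single_sum]
          congr 1
          rw [Finset.mul_sum]
          refine Finset.sum_congr rfl fun h _ => ?_
          rw [auxZeta_mul, mul_pow]
          ring
  rcases eq_or_ne i j with rfl | hij
  · rw [step, if_pos rfl, auxE]
    refine Finset.sum_congr rfl fun g _ => ?_
    congr 1
    rw [aux_sum_H p d χ hcyc hcard hχ i i, if_pos rfl]
    calc D * D * auxZeta p χ g ^ i.val * (d : WW p)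
        = (D * (d : WW p)) * (D * auxZeta p χ g ^ i.val) := by ring
      _ = D * auxZeta p χ g ^ i.val := by
          rw [hDdef, Ring.inverse_mul_cancel _ hD, one_mul]
  · rw [step, if_neg hij]
    refine Finset.sum_eq_zero fun g _ => ?_
    rw [aux_sum_H p d χ hcyc hcard hχ i j, if_neg hij, mul_zero, MonoidAlgebra.single_zero _]

theorem aux_sum_auxE (hpd : ¬ p ∣ d) (hcard : Fintype.card H = d)
    (hχ : Function.Injective χ) : ∑ i : ZMod d, auxE p d χ i = 1 := by
  have hD : IsUnit (d : WW p) := aux_isUnit_d p d hpd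
  unfold auxE
  rw [Finset.sum_comm]
  have hco : ∀ h : H, ∑ i : ZMod d, MonoidAlgebra.single h
      (Ring.inverse (d : WW p) * auxZeta p χ h ^ i.val)
      = MonoidAlgebra.single h (Ring.inverse (d : WW p) *
          (if h = 1 then (d : WW p) else 0)) := by
    intro h
    rw [← aux_sum_ZMod p d χ hcard hχ h, Finset.mul_sum, aux_single_sum]
  rw [Finset.sum_congr rfl fun h _ => hco h]
  rw [Finset.sum_eq_single_of_mem 1 (Finset.mem_univ 1)
    (fun h _ hne => by rw [if_neg hne, mul_zero, MonoidAlgebra.single_zero _])]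
  rw [if_pos rfl, Ring.inverse_mul_cancel _ hD, MonoidAlgebra.one_def]

theorem aux_piIdem_sq (hpd : ¬ p ∣ d) (hcyc : IsCyclic H) (hcard : Fintype.card H = d)
    (hχ : Function.Injective χ) {o : Finset (ZMod d)} (ho : o ∈ orbitsAll p d) :
    piIdem p d χ o * piIdem p d χ o = piIdem p d χ o := by
  rw [aux_piIdem_eq, Finset.sum_mul_sum]
  rw [Finset.sum_congr rfl fun i hi => Finset.sum_congr rfl fun j hj =>
    auxE_mul p d χ hpd hcyc hcard hχ i j]
  refine Finset.sum_congr rfl fun i hi => ?_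
  rw [Finset.sum_ite_eq o i (fun j => auxE p d χ j), if_pos hi]

theorem aux_piIdem_orth (hpd : ¬ p ∣ d) (hcyc : IsCyclic H) (hcard : Fintype.card H = d)
    (hχ : Function.Injective χ) {o o' : Finset (ZMod d)} (ho : o ∈ orbitsAll p d)
    (ho' : o' ∈ orbitsAll p d) (hne : o ≠ o') :
    piIdem p d χ o * piIdem p d χ o' = 0 := by
  rw [aux_piIdem_eq, aux_piIdem_eq, Finset.sum_mul_sum]
  refine Finset.sum_eq_zero fun i hi => Finset.sum_eq_zero fun j hj => ?_
  rw [auxE_mul p d χ hpd hcyc hcard hχ i j,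
    if_neg (aux_orbits_disjoint p d hpd ho ho' hne i hi j hj)]

theorem aux_piIdem_total (hpd : ¬ p ∣ d) (hcard : Fintype.card H = d)
    (hχ : Function.Injective χ) :
    ∑ o ∈ orbitsAll p d, piIdem p d χ o = 1 := by
  rw [Finset.sum_congr rfl fun o _ => aux_piIdem_eq p d χ o]
  have hfib : ∀ o ∈ orbitsAll p d, ∑ i ∈ o, auxE p d χ i
      = ∑ i ∈ Finset.univ.filter (fun i => orb p d i = o), auxE p d χ i := by
    intro o ho
    refine Finset.sum_congr ?_ fun _ _ => rfl
    ext i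
    simp only [Finset.mem_filter, Finset.mem_univ, true_and]
    exact aux_mem_iff_orb_eq p d hpd ho i
  rw [Finset.sum_congr rfl hfib,
    Finset.sum_fiberwise_of_maps_to (fun i _ => aux_mem_orbitsAll p d i) (auxE p d χ)]
  exact aux_sum_auxE p d χ hpd hcard hχ

theorem aux_piIdem_apply (o : Finset (ZMod d)) (h : H) :
    (piIdem p d χ o).coeff h = Ring.inverse (d : WW p) * ∑ i ∈ o, auxZeta p χ h ^ i.val := by
  unfold piIdem
  rw [MonoidAlgebra.coeff_sum, Finset.sum_apply']
  rw [Finset.sum_eq_single_of_mem h (Finset.mem_univ h)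
    (fun g _ hne => by rw [MonoidAlgebra.single_apply, if_neg hne])]
  rw [MonoidAlgebra.single_apply, if_pos rfl]
  congr 1
  exact Finset.sum_congr rfl fun i _ => aux_teich_eq p d χ h i

theorem aux_piIdem_coeff_mem (hpd : ¬ p ∣ d) (hcard : Fintype.card H = d)
    {o : Finset (ZMod d)} (ho : o ∈ orbitsAll p d) (h : H) :
    (piIdem p d χ o).coeff h ∈ (algebraMap ℤ_[p] (WW p)).range := by
  obtain ⟨i0, -, rfl⟩ := Finset.mem_image.mp ho
  rw [aux_piIdem_apply]
  refine mul_mem (aux_inverse_d_mem p d hpd) ?_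
  apply aux_mem_range_of_frob
  rw [map_sum]
  have hz : auxZeta p χ h ^ d = 1 := auxZeta_pow_d p χ hcard h
  have hterm : ∀ i : ZMod d, WittVector.frobenius (auxZeta p χ h ^ i.val)
      = auxZeta p χ h ^ ((p : ZMod d) * i).val := by
    intro i
    rw [map_pow, show WittVector.frobenius (auxZeta p χ h) = auxZeta p χ h ^ p from
      aux_frobenius_teichmuller p _, ← pow_mul]
    refine aux_pow_eq_of_modeq hz ?_
    have h1 : ((p : ZMod d) * i).val = ((p % d) * i.val) % d := by
      rw [ZMod.val_mul, ZMod.val_natCast]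
    rw [h1]
    calc p * i.val ≡ (p % d) * i.val [MOD d] :=
          ((Nat.mod_modEq p d).symm).mul_right i.val
      _ ≡ ((p % d) * i.val) % d [MOD d] := (Nat.mod_modEq _ d).symm
  rw [Finset.sum_congr rfl fun i _ => hterm i]
  have hinj : Function.Injective (fun x : ZMod d => (p : ZMod d) * x) := by
    intro a b hab
    rw [← aux_coe_u p d hpd] at hab
    exact (Units.mul_right_inj _).mp hab
  rw [show (∑ i ∈ orb p d i0, auxZeta p χ h ^ ((p : ZMod d) * i).val)
      = ∑ x ∈ Finset.image (fun i => (p : ZMod d) * i) (orb p d i0), auxZeta p χ h ^ x.val from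
    (Finset.sum_image (f := fun x : ZMod d => auxZeta p χ h ^ x.val)
      (g := fun i : ZMod d => (p : ZMod d) * i)
      (fun a _ b _ hab => hinj hab)).symm]
  rw [aux_image_mul_p p d hpd]

end AuxE

section AuxMod

variable (p d : ℕ) [Fact p.Prime] [NeZero d] {H : Type} [CommGroup H] [Fintype H]
variable (χ : H →* (KK p)ˣ)

theorem aux_smul_single (z : ℤ_[p]) (g : H) (w : WW p) :
    z • (MonoidAlgebra.single g w : MonoidAlgebra (WW p) H)
      = MonoidAlgebra.single g (algebraMap ℤ_[p] (WW p) z * w) := by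
  rw [Algebra.smul_def]
  rw [show algebraMap ℤ_[p] (MonoidAlgebra (WW p) H) z
      = MonoidAlgebra.single 1 (algebraMap ℤ_[p] (WW p) z) from by
    rw [MonoidAlgebra.coe_algebraMap]; rfl]
  rw [MonoidAlgebra.single_mul_single, one_mul]

instance aux_nzsd : NoZeroSMulDivisors ℤ_[p] (MonoidAlgebra (WW p) H) := by
  constructor
  intro z x hzx
  rcases eq_or_ne z 0 with rfl | hz
  · exact Or.inl rfl
  · refine Or.inr ?_
    have hx : ∀ g : H, x.coeff g = 0 := by
      intro g
      have h1 : (z • x).coeff g = 0 := by rw [hzx]; rfl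
      rw [Algebra.smul_def] at h1
      rw [show algebraMap ℤ_[p] (MonoidAlgebra (WW p) H) z
          = MonoidAlgebra.single 1 (algebraMap ℤ_[p] (WW p) z) from by
        rw [MonoidAlgebra.coe_algebraMap]; rfl] at h1
      rw [MonoidAlgebra.single_one_mul_apply] at h1
      have hz' : algebraMap ℤ_[p] (WW p) z ≠ 0 := by
        intro h0
        exact hz (aux_algebraMap_inj p (by rw [h0, map_zero]))
      exact (mul_eq_zero.mp h1).resolve_left hz'
    exact MonoidAlgebra.coeff_eq_zero.mp (Finsupp.ext hx)

theorem aux_lin_indep : LinearIndependent ℤ_[p]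
    (fun h : H => (MonoidAlgebra.single h (1 : WW p) : MonoidAlgebra (WW p) H)) := by
  rw [linearIndependent_iff']
  intro s g hsum h hh
  have h1 : (∑ i ∈ s, g i • (MonoidAlgebra.single i (1 : WW p) :
      MonoidAlgebra (WW p) H)).coeff h = 0 := by rw [hsum]; rfl
  rw [MonoidAlgebra.coeff_sum, Finset.sum_apply'] at h1
  have h2 : ∀ i ∈ s, (g i • (MonoidAlgebra.single i (1 : WW p) :
      MonoidAlgebra (WW p) H)).coeff h = if i = h then algebraMap ℤ_[p] (WW p) (g i) else 0 := by
    intro i _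
    rw [aux_smul_single, mul_one, MonoidAlgebra.single_apply]
  rw [Finset.sum_congr rfl h2, Finset.sum_ite_eq' s h
    (fun i => algebraMap ℤ_[p] (WW p) (g i)), if_pos hh] at h1
  exact aux_algebraMap_inj p (by rw [h1, map_zero])

set_option synthInstance.maxHeartbeats 1000000 in
set_option maxHeartbeats 1600000 in
theorem aux_module_main (hpd : ¬ p ∣ d) (hcyc : IsCyclic H) (hcard : Fintype.card H = d)
    (hχ : Function.Injective χ) {o : Finset (ZMod d)} (ho : o ∈ orbitsAll p d) :
    Module.Free ℤ_[p]
      (Submodule.map (LinearMap.mulLeft ℤ_[p] (piIdem p d χ o))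
        (Submodule.span ℤ_[p] (Set.range fun h : H =>
          (MonoidAlgebra.single h (1 : WW p))))) ∧
    Module.finrank ℤ_[p]
      (Submodule.map (LinearMap.mulLeft ℤ_[p] (piIdem p d χ o))
        (Submodule.span ℤ_[p] (Set.range fun h : H =>
          (MonoidAlgebra.single h (1 : WW p)))))
      = o.card := by
  classical
  set π : MonoidAlgebra (WW p) H := piIdem p d χ o with hπ
  set M : Submodule ℤ_[p] (MonoidAlgebra (WW p) H) :=
    Submodule.span ℤ_[p] (Set.range fun h : H => (MonoidAlgebra.single h (1 : WW p))) with hM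
  have hcoeff : ∀ g : H, ∃ z : ℤ_[p], algebraMap ℤ_[p] (WW p) z = π.coeff g :=
    fun g => aux_piIdem_coeff_mem p d χ hpd hcard ho g
  choose zz hzz using hcoeff
  have hexp : ∀ h : H, π * MonoidAlgebra.single h (1 : WW p)
      = ∑ g : H, zz g • MonoidAlgebra.single (g * h) (1 : WW p) := by
    intro h
    have h1 : π = ∑ g : H, MonoidAlgebra.single g (π.coeff g) := by
      ext g'
      rw [MonoidAlgebra.coeff_sum, Finset.sum_apply']
      rw [Finset.sum_eq_single_of_mem g' (Finset.mem_univ g')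
        (fun b _ hne => by rw [MonoidAlgebra.single_apply, if_neg hne])]
      rw [MonoidAlgebra.single_apply, if_pos rfl]
    conv_lhs => rw [h1]
    rw [Finset.sum_mul]
    refine Finset.sum_congr rfl fun g _ => ?_
    rw [MonoidAlgebra.single_mul_single, aux_smul_single, hzz]
  have hmapsto : ∀ x ∈ M, π * x ∈ M := by
    intro x hx
    refine Submodule.span_induction ?_ ?_ ?_ ?_ hx
    · rintro y ⟨h, rfl⟩
      rw [hexp]
      exact Submodule.sum_mem _ fun g _ => Submodule.smul_mem _ _
        (Submodule.subset_span ⟨g * h, rfl⟩)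
    · rw [mul_zero]; exact Submodule.zero_mem _
    · intro a b _ _ ha hb
      rw [mul_add]; exact Submodule.add_mem _ ha hb
    · intro z a _ ha
      rw [mul_smul_comm]; exact Submodule.smul_mem _ _ ha
  set T : M →ₗ[ℤ_[p]] M := (LinearMap.mulLeft ℤ_[p] π).restrict hmapsto with hT
  have hTval : ∀ x : M, (T x : MonoidAlgebra (WW p) H) = π * (x : MonoidAlgebra (WW p) H) :=
    fun x => rfl
  have hΓ : Submodule.map (LinearMap.mulLeft ℤ_[p] π) M
      = Submodule.map M.subtype (LinearMap.range T) := by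
    ext x
    simp only [Submodule.mem_map, LinearMap.mem_range, LinearMap.mulLeft_apply]
    constructor
    · rintro ⟨y, hy, rfl⟩
      exact ⟨T ⟨y, hy⟩, ⟨⟨y, hy⟩, rfl⟩, (hTval ⟨y, hy⟩)⟩
    · rintro ⟨z, ⟨y, rfl⟩, rfl⟩
      exact ⟨(y : MonoidAlgebra (WW p) H), y.2, (hTval y).symm⟩
  haveI hMfin : Module.Finite ℤ_[p] M :=
    Module.Finite.span_of_finite ℤ_[p] (Set.finite_range _)
  haveI hMnoeth : IsNoetherian ℤ_[p] M :=
    isNoetherian_of_isNoetherianRing_of_finite ℤ_[p] M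
  haveI hker : Module.Finite ℤ_[p] (LinearMap.ker T) :=
    Module.Finite.iff_fg.mpr (IsNoetherian.noetherian _)
  haveI hrange : Module.Finite ℤ_[p] (LinearMap.range T) :=
    Module.Finite.iff_fg.mpr (IsNoetherian.noetherian _)
  haveI hnz1 : NoZeroSMulDivisors ℤ_[p] M := Function.Injective.noZeroSMulDivisors Subtype.val Subtype.val_injective rfl (fun _ _ => rfl)
  haveI hnz2 : NoZeroSMulDivisors ℤ_[p] (LinearMap.range T) :=
    Function.Injective.noZeroSMulDivisors Subtype.val Subtype.val_injective rfl (fun _ _ => rfl)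
  haveI hnz3 : NoZeroSMulDivisors ℤ_[p] (LinearMap.ker T) :=
    Function.Injective.noZeroSMulDivisors Subtype.val Subtype.val_injective rfl (fun _ _ => rfl)
  haveI hfree1 : Module.Free ℤ_[p] (LinearMap.range T) :=
    Module.free_of_finite_type_torsion_free' (R := ℤ_[p]) (M := ↥(LinearMap.range T))
  haveI hfree2 : Module.Free ℤ_[p] (LinearMap.ker T) :=
    Module.free_of_finite_type_torsion_free' (R := ℤ_[p]) (M := ↥(LinearMap.ker T))
  have hππ : π * π = π := aux_piIdem_sq p d χ hpd hcyc hcard hχ ho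
  have hproj : LinearMap.IsProj (LinearMap.range T) T := by
    refine ⟨fun x => LinearMap.mem_range_self T x, ?_⟩
    rintro x ⟨y, rfl⟩
    apply Subtype.ext
    rw [hTval, hTval, ← mul_assoc, hππ]
  have htrace := hproj.trace
  have hli := aux_lin_indep (p := p) (H := H)
  let b : Module.Basis H ℤ_[p] M := Module.Basis.span hli
  have hbv : ∀ h : H, (b h : MonoidAlgebra (WW p) H) = MonoidAlgebra.single h (1 : WW p) :=
    fun h => Module.Basis.coe_span_apply hli h
  have hTb : ∀ h : H, T (b h) = ∑ g : H, zz (g * h⁻¹) • b g := by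
    intro h
    apply Subtype.ext
    rw [hTval, hbv, hexp]
    rw [show ((∑ g : H, zz (g * h⁻¹) • b g : M) : MonoidAlgebra (WW p) H)
        = ∑ g : H, zz (g * h⁻¹) • (b g : MonoidAlgebra (WW p) H) from by
      push_cast
      rfl]
    simp only [hbv]
    rw [← Equiv.sum_comp (Equiv.mulRight h)
      (fun g' => zz (g' * h⁻¹) • MonoidAlgebra.single g' (1 : WW p))]
    refine Finset.sum_congr rfl fun g _ => ?_
    simp only [Equiv.coe_mulRight, mul_inv_cancel_right]
  have hrepr : ∀ h : H, b.repr (T (b h)) h = zz 1 := by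
    intro h
    rw [hTb, map_sum]
    have hstep : (∑ g : H, b.repr (zz (g * h⁻¹) • b g))
        = ∑ g : H, zz (g * h⁻¹) • Finsupp.single g (1 : ℤ_[p]) :=
      Finset.sum_congr rfl fun g _ => by rw [map_smul, Module.Basis.repr_self]
    rw [hstep]
    rw [Finset.sum_apply']
    rw [Finset.sum_congr rfl (fun g _ => by
      rw [Finsupp.smul_apply, Finsupp.single_apply, smul_eq_mul, mul_ite, mul_one, mul_zero])]
    rw [Finset.sum_ite_eq' Finset.univ h (fun g => zz (g * h⁻¹)),
      if_pos (Finset.mem_univ h), mul_inv_cancel]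
  have htr2 : LinearMap.trace ℤ_[p] M T = (Fintype.card H : ℤ_[p]) * zz 1 := by
    rw [LinearMap.trace_eq_matrix_trace ℤ_[p] b T]
    rw [Matrix.trace]
    calc ∑ h : H, (LinearMap.toMatrix b b T).diag h
        = ∑ _h : H, zz 1 := Finset.sum_congr rfl fun h _ => by
          rw [Matrix.diag_apply, LinearMap.toMatrix_apply, hrepr]
      _ = (Fintype.card H : ℤ_[p]) * zz 1 := by
          rw [Finset.sum_const, Finset.card_univ, nsmul_eq_mul]
  have hzzval : (Fintype.card H : ℤ_[p]) * zz 1 = (o.card : ℤ_[p]) := by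
    apply aux_algebraMap_inj p
    rw [map_mul, map_natCast, hzz, map_natCast, hcard]
    rw [hπ, aux_piIdem_apply]
    simp only [auxZeta_one, one_pow]
    rw [Finset.sum_const, nsmul_eq_mul, mul_one]
    rw [← mul_assoc, Ring.mul_inverse_cancel _ (aux_isUnit_d p d hpd), one_mul]
  have hfin : Module.finrank ℤ_[p] (LinearMap.range T) = o.card := by
    have hc : ((Module.finrank ℤ_[p] (LinearMap.range T) : ℤ_[p])) = ((o.card : ℤ_[p])) := by
      rw [← htrace, htr2, hzzval]
    exact Nat.cast_injective hc
  rw [hΓ]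
  have e := Submodule.equivMapOfInjective M.subtype M.injective_subtype (LinearMap.range T)
  exact ⟨Module.Free.of_equiv e, (e.finrank_eq).symm.trans hfin⟩

end AuxMod


/-- the elements `π_o`, as `o` ranges over the orbits of `⟨p⟩` on `ℤ/dℤ`,
form a complete system of orthogonal idempotents of `W[H]`; all their coefficients lie
in the image of `ℤ_p` in `W`; and for each orbit `o` the `ℤ_p`-module
`Γ_o = π_o·ℤ_p[H]` is free of rank `|o|`. -/
theorem piIdem_orthogonal_idempotents (p d : ℕ) [Fact p.Prime] [NeZero d]
    (hpd : ¬ p ∣ d) {H : Type} [CommGroup H] [Fintype H] (hcyc : IsCyclic H)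
    (hcard : Fintype.card H = d) (χ : H →* (AlgebraicClosure (ZMod p))ˣ)
    (hχ : Function.Injective χ) :
    (∀ o ∈ orbitsAll p d, piIdem p d χ o * piIdem p d χ o = piIdem p d χ o) ∧
    (∀ o ∈ orbitsAll p d, ∀ o' ∈ orbitsAll p d, o ≠ o' →
      piIdem p d χ o * piIdem p d χ o' = 0) ∧
    (∑ o ∈ orbitsAll p d, piIdem p d χ o = 1) ∧
    (∀ o ∈ orbitsAll p d, ∀ h : H,
      (piIdem p d χ o).coeff h ∈
        (algebraMap ℤ_[p] (WittVector p (AlgebraicClosure (ZMod p)))).range) ∧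
    (∀ o ∈ orbitsAll p d,
      Module.Free ℤ_[p]
        (Submodule.map (LinearMap.mulLeft ℤ_[p] (piIdem p d χ o))
          (Submodule.span ℤ_[p] (Set.range fun h : H =>
            (MonoidAlgebra.single h (1 : WittVector p (AlgebraicClosure (ZMod p))))))) ∧
      Module.finrank ℤ_[p]
        (Submodule.map (LinearMap.mulLeft ℤ_[p] (piIdem p d χ o))
          (Submodule.span ℤ_[p] (Set.range fun h : H =>
            (MonoidAlgebra.single h (1 : WittVector p (AlgebraicClosure (ZMod p)))))))
        = o.card) :=
  ⟨fun o ho => aux_piIdem_sq p d χ hpd hcyc hcard hχ ho,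
    fun o ho o' ho' hne => aux_piIdem_orth p d χ hpd hcyc hcard hχ ho ho' hne,
    aux_piIdem_total p d χ hpd hcard hχ,
    fun o ho h => aux_piIdem_coeff_mem p d χ hpd hcard ho h,
    fun o ho => aux_module_main p d χ hpd hcyc hcard hχ ho⟩

end
end

section
/- Let k > 1 and let e_1,…,e_{2k−1} be positive integers. Choose an index i with e_i = min{e_1,…,e_{2k−1}}, and define B' = B(e_3,…,e_{2k−1}) if i = 1; B' = B(e_1,…,e_{i−2}, e_{i−1}−e_i+e_{i+1}, e_{i+2},…,e_{2k−1}) if 1 < i < 2k−1; and B' = B(e_1,…,e_{2k−3}) if i = 2k−1. Then B(e_1,…,e_{2k−1}) is equivalent to the block-diagonal matrix (p^{e_i}) ⊕ B'. Moreover the greatest common divisor of the entries of B(e_1,…,e_{2k−1}) (equivalently, its first invariant factor) is p^{min{e_1,…,e_{2k−1}}}. -/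
/-- The `k × k` upper-bidiagonal integer matrix with diagonal entries
`p^(e 1), p^(e 3), …, p^(e (2k−1))` and superdiagonal entries
`−p^(e 2), −p^(e 4), …, −p^(e (2k−2))` (indices of `e` are 1-based). -/
def Bmat (p k : ℕ) (e : ℕ → ℕ) : Matrix (Fin k) (Fin k) ℤ :=
  Matrix.of fun i j =>
    if (j : ℕ) = (i : ℕ) then (p : ℤ) ^ (e (2 * (i : ℕ) + 1))
    else if (j : ℕ) = (i : ℕ) + 1 then -(p : ℤ) ^ (e (2 * (i : ℕ) + 2))
    else 0

/-- Two square integer matrices (possibly indexed by different types of the same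
cardinality) are equivalent if one can be transformed into the other by integer
row and column operations, i.e. by left and right multiplication by matrices
invertible over `ℤ` (after an identification of the index types). -/
def MatEquiv {m n : Type} [Fintype m] [DecidableEq m] [Fintype n] [DecidableEq n]
    (M : Matrix m m ℤ) (N : Matrix n n ℤ) : Prop :=
  ∃ (σ : m ≃ n) (P Q : (Matrix n n ℤ)ˣ),
    N = (P : Matrix n n ℤ) * (Matrix.reindex σ σ M) * (Q : Matrix n n ℤ)

open Matrix

lemma coe_succAbove {n : ℕ} (m : Fin (n+1)) (a : Fin n) :
    ((m.succAbove a : Fin (n+1)) : ℕ) = if (a:ℕ) < (m:ℕ) then (a:ℕ) else (a:ℕ)+1 := by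
  unfold Fin.succAbove
  split_ifs with h1 h2 h2 <;> simp_all [Fin.lt_def]

def remEquiv (n : ℕ) (m : Fin (n+2)) : Fin (n+2) ≃ Fin 1 ⊕ Fin (n+1) :=
  (finSuccEquiv' m).trans ((Equiv.optionEquivSumPUnit _).trans
    ((Equiv.sumComm _ _).trans (Equiv.sumCongr (Equiv.equivPUnit.{1,1} (Fin 1)).symm (Equiv.refl _))))

@[simp] lemma remEquiv_symm_inl {n : ℕ} (m : Fin (n+2)) (x : Fin 1) :
    (remEquiv n m).symm (Sum.inl x) = m := by
  simp [remEquiv, finSuccEquiv'_symm_none]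

@[simp] lemma remEquiv_symm_inr {n : ℕ} (m : Fin (n+2)) (b : Fin (n+1)) :
    (remEquiv n m).symm (Sum.inr b) = m.succAbove b := by
  simp [remEquiv, finSuccEquiv'_symm_some]

def tvUnit {m : Type} [Fintype m] [DecidableEq m] (a b : m) (h : a ≠ b) (c : ℤ) :
    (Matrix m m ℤ)ˣ where
  val := Matrix.transvection a b c
  inv := Matrix.transvection a b (-c)
  val_inv := by rw [Matrix.transvection_mul_transvection_same _ _ h]; simp [Matrix.transvection]
  inv_val := by rw [Matrix.transvection_mul_transvection_same _ _ h]; simp [Matrix.transvection]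

@[simp] lemma tvUnit_coe {m : Type} [Fintype m] [DecidableEq m] (a b : m) (h : a ≠ b) (c : ℤ) :
    ((tvUnit a b h c : (Matrix m m ℤ)ˣ) : Matrix m m ℤ) = Matrix.transvection a b c := rfl

def permUnit {m : Type} [Fintype m] [DecidableEq m] (f : m ≃ m) : (Matrix m m ℤ)ˣ where
  val := f.toPEquiv.toMatrix
  inv := f.symm.toPEquiv.toMatrix
  val_inv := by
    rw [← PEquiv.toMatrix_trans, ← Equiv.toPEquiv_trans]
    simp
  inv_val := by
    rw [← PEquiv.toMatrix_trans, ← Equiv.toPEquiv_trans]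
    simp

lemma tv_mul_apply {m : Type} [Fintype m] [DecidableEq m] (i j a b : m) (c : ℤ)
    (M : Matrix m m ℤ) :
    (Matrix.transvection i j c * M) a b = M a b + (if a = i then c * M j b else 0) := by
  rcases eq_or_ne a i with rfl | h
  · simp
  · simp [h]

lemma mul_tv_apply {m : Type} [Fintype m] [DecidableEq m] (i j a b : m) (c : ℤ)
    (M : Matrix m m ℤ) :
    (M * Matrix.transvection i j c) a b = M a b + (if b = j then c * M a i else 0) := by
  rcases eq_or_ne b j with rfl | h
  · simp
  · simp [h]

lemma pow_congr' {p : ℤ} {e : ℕ → ℕ} {x y : ℕ} (h : x = y) : p ^ e x = p ^ e y := by rw [h]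
lemma neg_pow_congr' {p : ℤ} {e : ℕ → ℕ} {x y : ℕ} (h : x = y) : -p ^ e x = -p ^ e y := by rw [h]

lemma cancel₁ {p : ℤ} {e : ℕ → ℕ} {x y : ℕ} (h : x = y) : (0:ℤ) = -p ^ e x + p ^ e y := by
  rw [h]; ring
lemma cancel₂ {p : ℤ} {e : ℕ → ℕ} {x y : ℕ} (h : x = y) : -p ^ e x + p ^ e y = (0:ℤ) := by
  rw [h]; ring

lemma kill₁ {p : ℤ} {e : ℕ → ℕ} {x y z : ℕ} (h1 : e x ≤ e z) (h2 : z = y) :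
    (0:ℤ) = -p ^ e y + p ^ (e z - e x) * p ^ e x := by
  subst h2; rw [pow_sub_mul_pow _ h1]; ring
lemma kill₂ {p : ℤ} {e : ℕ → ℕ} {x y z : ℕ} (h1 : e x ≤ e z) (h2 : z = y) :
    -p ^ e y + p ^ (e z - e x) * p ^ e x = (0:ℤ) := by
  subst h2; rw [pow_sub_mul_pow _ h1]; ring

lemma merge₁ {p : ℤ} {e : ℕ → ℕ} {A B C X : ℕ} (h1 : e B ≤ e A) (h2 : X = A) :
    -p ^ (e A - e B + e C) = 0 + -(p ^ (e A - e B) * p ^ e C) +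
      p ^ (e C - e B) * (-p ^ e X + p ^ (e A - e B) * p ^ e B) := by
  subst h2; rw [pow_sub_mul_pow _ h1, pow_add]; ring

def negUnit {m : Type} [Fintype m] [DecidableEq m] (a : m) : (Matrix m m ℤ)ˣ where
  val := Matrix.diagonal (fun x => if x = a then -1 else 1)
  inv := Matrix.diagonal (fun x => if x = a then -1 else 1)
  val_inv := by
    rw [Matrix.diagonal_mul_diagonal]
    have : (fun x => (if x = a then (-1:ℤ) else 1) * (if x = a then -1 else 1)) =
        fun _ => (1:ℤ) := by funext x; split_ifs <;> norm_num
    rw [this, Matrix.diagonal_one]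
  inv_val := by
    rw [Matrix.diagonal_mul_diagonal]
    have : (fun x => (if x = a then (-1:ℤ) else 1) * (if x = a then -1 else 1)) =
        fun _ => (1:ℤ) := by funext x; split_ifs <;> norm_num
    rw [this, Matrix.diagonal_one]

@[simp] lemma negUnit_coe {m : Type} [Fintype m] [DecidableEq m] (a : m) :
    ((negUnit a : (Matrix m m ℤ)ˣ) : Matrix m m ℤ)
      = Matrix.diagonal (fun x => if x = a then -1 else 1) := rfl

lemma negUnit_mul_apply {m : Type} [Fintype m] [DecidableEq m] (a x y : m) (M : Matrix m m ℤ) :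
    (((negUnit a : (Matrix m m ℤ)ˣ) : Matrix m m ℤ) * M) x y
      = (if x = a then -1 else 1) * M x y := by
  rw [negUnit_coe, Matrix.diagonal_mul]

lemma kill₃ {p : ℤ} {e : ℕ → ℕ} {A B : ℕ} (h1 : e B ≤ e A) :
    (0:ℤ) = - -(p ^ (e A - e B) * p ^ e B) + -p ^ e A := by
  rw [pow_sub_mul_pow _ h1]; ring
lemma kill₄ {p : ℤ} {e : ℕ → ℕ} {B C X : ℕ} (h1 : e B ≤ e C) (h2 : X = C) :
    (0:ℤ) = p ^ e X + -(p ^ (e C - e B) * p ^ e B) := by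
  subst h2; rw [pow_sub_mul_pow _ h1]; ring
lemma merge₂ {p : ℤ} {e : ℕ → ℕ} {A B C X : ℕ} (h1 : e B ≤ e A) (h2 : X = C) :
    p ^ (e A - e B + e C) = 0 + p ^ (e A - e B) * p ^ e X +
      p ^ (e C - e B) * (p ^ e A + -(p ^ (e A - e B) * p ^ e B)) := by
  subst h2; rw [pow_sub_mul_pow _ h1, pow_add]; ring

lemma case_first (p n : ℕ) (e : ℕ → ℕ) (h12 : e 1 ≤ e 2) :
    MatEquiv (Bmat p (n+2) e)
      (Matrix.fromBlocks !![(p : ℤ) ^ (e 1)] 0 0 (Bmat p (n + 1) (fun j => e (j + 2)))) := by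
  refine ⟨remEquiv n 0, 1, tvUnit (Sum.inl 0) (Sum.inr 0) (by simp) ((p:ℤ)^(e 2 - e 1)), ?_⟩
  ext x y
  rw [Units.val_one, one_mul, tvUnit_coe, mul_tv_apply]
  rcases x with x | a <;> rcases y with y | b <;>
      simp [Matrix.reindex_apply, Matrix.submatrix_apply, Bmat, coe_succAbove,
        Matrix.fromBlocks, Fin.eq_zero, Fin.ext_iff, -Fin.val_eq_zero_iff, Nat.mul_add, Nat.mul_one, Nat.add_assoc] <;>
    split_ifs <;>
    first
      | omega
      | (simp_all; done)
      | (rw [pow_sub_mul_pow _ h12]; first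
            | ring
            | exact cancel₁ (e := e) (by omega)
            | exact cancel₂ (e := e) (by omega))
      | (exact cancel₁ (e := e) (by omega))
      | (exact cancel₂ (e := e) (by omega))
      | (exact pow_congr' (e := e) (by omega))
      | (exact neg_pow_congr' (e := e) (by omega))

lemma case_last (p n : ℕ) (e : ℕ → ℕ) (h : e (2*n+3) ≤ e (2*n+2)) :
    MatEquiv (Bmat p (n+2) e)
      (Matrix.fromBlocks !![(p : ℤ) ^ (e (2*n+3))] 0 0 (Bmat p (n + 1) e)) := by
  refine ⟨remEquiv n (Fin.last (n+1)),
    tvUnit (Sum.inr ⟨n, by omega⟩) (Sum.inl 0) (by simp) ((p:ℤ)^(e (2*n+2) - e (2*n+3))),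
    1, ?_⟩
  ext x y
  rw [Units.val_one, mul_one, tvUnit_coe, tv_mul_apply]
  rcases x with x | a <;> rcases y with y | b <;>
      simp [Matrix.reindex_apply, Matrix.submatrix_apply, Bmat, coe_succAbove,
        Matrix.fromBlocks, Fin.eq_zero, Fin.ext_iff, -Fin.val_eq_zero_iff, Fin.last,
        Nat.mul_add, Nat.mul_one, Nat.add_assoc] <;>
    split_ifs <;>
    first
      | omega
      | (exact kill₁ (e := e) h (by omega))
      | (exact kill₂ (e := e) h (by omega))
      | (exact cancel₁ (e := e) (by omega))
      | (exact cancel₂ (e := e) (by omega))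
      | (exact pow_congr' (e := e) (by omega))
      | (exact neg_pow_congr' (e := e) (by omega))
      | (simp_all; done)

set_option maxHeartbeats 2000000 in
lemma case_mid_odd (p n : ℕ) (e : ℕ → ℕ) (m : ℕ) (hm1 : 1 ≤ m) (hm2 : m ≤ n)
    (ha : e (2*m+1) ≤ e (2*m)) (hb : e (2*m+1) ≤ e (2*m+2)) :
    MatEquiv (Bmat p (n+2) e)
      (Matrix.fromBlocks !![(p : ℤ) ^ (e (2*m+1))] 0 0
        (Bmat p (n + 1) (fun j =>
          if j < 2*m then e j
          else if j = 2*m then e (2*m) - e (2*m+1) + e (2*m+2)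
          else e (j + 2)))) := by
  refine ⟨remEquiv n ⟨m, by omega⟩,
    tvUnit (Sum.inr ⟨m-1, by omega⟩) (Sum.inl 0) (by simp) ((p:ℤ)^(e (2*m) - e (2*m+1))),
    tvUnit (Sum.inl 0) (Sum.inr ⟨m, by omega⟩) (by simp) ((p:ℤ)^(e (2*m+2) - e (2*m+1))), ?_⟩
  ext x y
  rw [tvUnit_coe, tvUnit_coe, mul_tv_apply, tv_mul_apply, tv_mul_apply]
  rcases x with x | a <;> rcases y with y | b <;>
      simp [Matrix.reindex_apply, Matrix.submatrix_apply, Bmat, coe_succAbove,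
        Matrix.fromBlocks, Fin.eq_zero, Fin.ext_iff, -Fin.val_eq_zero_iff,
        Nat.mul_add, Nat.mul_one, Nat.add_assoc] <;>
    split_ifs <;>
    first
      | omega
      | ((refine kill₁ (e := e) ?_ ?_) <;> first | assumption | omega)
      | ((refine kill₂ (e := e) ?_ ?_) <;> first | assumption | omega)
      | ((refine merge₁ (e := e) ?_ ?_) <;> first | assumption | omega)
      | (refine cancel₁ (e := e) (by omega))
      | (refine cancel₂ (e := e) (by omega))
      | (refine pow_congr' (e := e) (by omega))
      | (refine neg_pow_congr' (e := e) (by omega))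
      | (simp_all; done)

set_option maxHeartbeats 2000000 in
lemma case_mid_even (p n : ℕ) (e : ℕ → ℕ) (m : ℕ) (hm2 : m ≤ n)
    (ha : e (2*m+2) ≤ e (2*m+1)) (hb : e (2*m+2) ≤ e (2*m+3)) :
    MatEquiv (Bmat p (n+2) e)
      (Matrix.fromBlocks !![(p : ℤ) ^ (e (2*m+2))] 0 0
        (Bmat p (n + 1) (fun j =>
          if j < 2*m+1 then e j
          else if j = 2*m+1 then e (2*m+1) - e (2*m+2) + e (2*m+3)
          else e (j + 2)))) := by
  refine ⟨remEquiv n ⟨m, by omega⟩,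
    negUnit (Sum.inl 0) *
      tvUnit (Sum.inr ⟨m, by omega⟩) (Sum.inl 0) (by simp) ((p:ℤ)^(e (2*m+3) - e (2*m+2))),
    permUnit ((remEquiv n ⟨m, by omega⟩).symm.trans (remEquiv n ⟨m+1, by omega⟩)) *
      tvUnit (Sum.inl 0) (Sum.inr ⟨m, by omega⟩) (by simp) ((p:ℤ)^(e (2*m+1) - e (2*m+2))), ?_⟩
  rw [Units.val_mul, Units.val_mul, tvUnit_coe, tvUnit_coe]
  rw [show (permUnit ((remEquiv n ⟨m, by omega⟩).symm.trans (remEquiv n ⟨m+1, by omega⟩)) :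
        Matrix (Fin 1 ⊕ Fin (n+1)) (Fin 1 ⊕ Fin (n+1)) ℤ)
      = ((remEquiv n ⟨m, by omega⟩).symm.trans
          (remEquiv n ⟨m+1, by omega⟩)).toPEquiv.toMatrix from rfl]
  simp only [Matrix.mul_assoc]
  rw [← Matrix.mul_assoc (Matrix.reindex _ _ _) (PEquiv.toMatrix _) _,
    PEquiv.mul_toMatrix_toPEquiv]
  ext x y
  rw [negUnit_mul_apply, tv_mul_apply, mul_tv_apply, mul_tv_apply]
  rcases x with x | a <;> rcases y with y | b <;>
      simp [Matrix.reindex_apply, Matrix.submatrix_apply, Bmat, coe_succAbove,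
        Matrix.fromBlocks, Fin.eq_zero, Fin.ext_iff, -Fin.val_eq_zero_iff, Equiv.symm_trans_apply,
        Nat.mul_add, Nat.mul_one, Nat.add_assoc] <;>
    split_ifs <;>
    first
      | omega
      | (simp_all; done)
      | ((refine kill₁ (e := e) ?_ ?_) <;> first | assumption | omega)
      | ((refine kill₂ (e := e) ?_ ?_) <;> first | assumption | omega)
      | ((refine merge₁ (e := e) ?_ ?_) <;> first | assumption | omega)
      | ((refine merge₂ (e := e) ?_ ?_) <;> first | assumption | omega)
      | (refine kill₃ (e := e) ?_; assumption)
      | ((refine kill₄ (e := e) ?_ ?_) <;> first | assumption | omega)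
      | (refine cancel₁ (e := e) (by omega))
      | (refine cancel₂ (e := e) (by omega))
      | (refine pow_congr' (e := e) (by omega))
      | (refine neg_pow_congr' (e := e) (by omega))

lemma gcd_part (p n : ℕ) (e : ℕ → ℕ) (i : ℕ) (hi1 : 1 ≤ i) (hi2 : i ≤ 2 * (n + 2) - 1)
    (hmin : ∀ j, 1 ≤ j → j ≤ 2 * (n + 2) - 1 → e i ≤ e j) :
    Finset.gcd Finset.univ
        (fun ij : Fin (n + 2) × Fin (n + 2) => Bmat p (n + 2) e ij.1 ij.2)
      = (p : ℤ) ^ (e i) := by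
  have hdvd1 : (p:ℤ) ^ (e i) ∣ Finset.gcd Finset.univ
      (fun ij : Fin (n + 2) × Fin (n + 2) => Bmat p (n + 2) e ij.1 ij.2) := by
    refine Finset.dvd_gcd fun ij _ => ?_
    show (p:ℤ) ^ (e i) ∣ Bmat p (n+2) e ij.1 ij.2
    rcases ij with ⟨a, b⟩
    simp only [Bmat, Matrix.of_apply]
    split_ifs with h1 h2
    · exact pow_dvd_pow _ (hmin _ (by omega) (by omega))
    · exact (dvd_neg).2 (pow_dvd_pow _ (hmin _ (by omega) (by omega)))
    · exact dvd_zero _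
  have hdvd2 : Finset.gcd Finset.univ
      (fun ij : Fin (n + 2) × Fin (n + 2) => Bmat p (n + 2) e ij.1 ij.2) ∣ (p:ℤ) ^ (e i) := by
    rcases Nat.even_or_odd i with he' | ho
    · obtain ⟨m, rfl⟩ : ∃ m, i = 2*m+2 := by
        obtain ⟨t, ht⟩ := he'; exact ⟨t - 1, by omega⟩
      have hval : Bmat p (n+2) e ⟨m, by omega⟩ ⟨m+1, by omega⟩ = -(p:ℤ) ^ (e (2*m+2)) := by
        simp [Bmat]
      have := Finset.gcd_dvd (f := fun ij : Fin (n + 2) × Fin (n + 2) =>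
          Bmat p (n + 2) e ij.1 ij.2)
        (Finset.mem_univ ((⟨m, by omega⟩ : Fin (n+2)), (⟨m+1, by omega⟩ : Fin (n+2))))
      simp only [hval] at this
      exact (dvd_neg).1 this
    · obtain ⟨m, rfl⟩ : ∃ m, i = 2*m+1 := by
        obtain ⟨t, ht⟩ := ho; exact ⟨t, by omega⟩
      have hval : Bmat p (n+2) e ⟨m, by omega⟩ ⟨m, by omega⟩ = (p:ℤ) ^ (e (2*m+1)) := by
        simp [Bmat]
      have := Finset.gcd_dvd (f := fun ij : Fin (n + 2) × Fin (n + 2) =>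
          Bmat p (n + 2) e ij.1 ij.2)
        (Finset.mem_univ ((⟨m, by omega⟩ : Fin (n+2)), (⟨m, by omega⟩ : Fin (n+2))))
      simp only [hval] at this
      exact this
  exact dvd_antisymm_of_normalize_eq Finset.normalize_gcd
    (Int.normalize_of_nonneg (by positivity)) hdvd2 hdvd1

/-- Lemma on first invariant factor: with `k = n + 2 > 1` and positive
integers `e 1, …, e (2k−1)`, if `e i` is minimal then `B(e 1,…,e (2k−1))` is equivalent
to `(p^(e i)) ⊕ B'` where `B'` is obtained by deleting/merging around index `i`; moreover
the gcd of the entries of `B(e 1,…,e (2k−1))` is `p^(e i)`. -/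

theorem bidiagonal_first_invariant_factor (p : ℕ) (hp : p.Prime) (n : ℕ) (e : ℕ → ℕ)
    (he : ∀ j, 1 ≤ j → j ≤ 2 * (n + 2) - 1 → 0 < e j)
    (i : ℕ) (hi1 : 1 ≤ i) (hi2 : i ≤ 2 * (n + 2) - 1)
    (hmin : ∀ j, 1 ≤ j → j ≤ 2 * (n + 2) - 1 → e i ≤ e j) :
    (i = 1 →
      MatEquiv (Bmat p (n + 2) e)
        (Matrix.fromBlocks !![(p : ℤ) ^ (e 1)] 0 0
          (Bmat p (n + 1) (fun j => e (j + 2))))) ∧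
    (1 < i → i < 2 * (n + 2) - 1 →
      MatEquiv (Bmat p (n + 2) e)
        (Matrix.fromBlocks !![(p : ℤ) ^ (e i)] 0 0
          (Bmat p (n + 1) (fun j =>
            if j < i - 1 then e j
            else if j = i - 1 then e (i - 1) - e i + e (i + 1)
            else e (j + 2))))) ∧
    (i = 2 * (n + 2) - 1 →
      MatEquiv (Bmat p (n + 2) e)
        (Matrix.fromBlocks !![(p : ℤ) ^ (e i)] 0 0 (Bmat p (n + 1) e))) ∧
    Finset.gcd Finset.univ
        (fun ij : Fin (n + 2) × Fin (n + 2) => Bmat p (n + 2) e ij.1 ij.2)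
      = (p : ℤ) ^ (e i) := by
  refine ⟨?_, ?_, ?_, gcd_part p n e i hi1 hi2 hmin⟩
  · rintro rfl
    exact case_first p n e (hmin 2 (by omega) (by omega))
  · intro h1 h2
    rcases Nat.even_or_odd i with he' | ho
    · obtain ⟨m, rfl⟩ : ∃ m, i = 2*m+2 := by
        obtain ⟨t, ht⟩ := he'; exact ⟨t - 1, by omega⟩
      have key := case_mid_even p n e m (by omega)
        (hmin (2*m+1) (by omega) (by omega)) (hmin (2*m+3) (by omega) (by omega))
      simpa using key
    · obtain ⟨m, rfl⟩ : ∃ m, i = 2*m+1 := by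
        obtain ⟨t, ht⟩ := ho; exact ⟨t, by omega⟩
      have key := case_mid_odd p n e m (by omega) (by omega)
        (hmin (2*m) (by omega) (by omega)) (hmin (2*m+2) (by omega) (by omega))
      simpa using key
  · rintro rfl
    have key := case_last p n e (hmin (2*n+2) (by omega) (by omega))
    rwa [show 2 * (n + 2) - 1 = 2 * n + 3 by omega]
end

section
/- Assume f ≥ 2. The number of elements i ∈ S whose pattern begins with the two letters lu equals ((p−1)/2)·((p^{f−1}+1)/2), and the number of i ∈ S whose pattern begins with the two letters ll equals ((p+1)/2)·((p^{f−1}−1)/2). -/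
open scoped Classical

lemma aux_count (s t : ℕ) (hs : 1 ≤ s) (ht : 1 ≤ t) :
    ((Finset.Ico 1 (2*s*t+s+t+1)).filter
      (fun n => 1 ≤ n % (2*t+1) ∧ 2*(n % (2*t+1)) < 2*t+1)).card = (s+1)*t := by
  have hcard : (s+1)*t = ((Finset.range (s+1)) ×ˢ (Finset.Ico 1 (t+1))).card := by
    rw [Finset.card_product, Finset.card_range, Nat.card_Ico]; norm_num
  rw [hcard]
  apply Finset.card_bij' (fun n _ => (n / (2*t+1), n % (2*t+1)))
      (fun ab _ => ab.2 + ab.1*(2*t+1))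
  · intro n hn
    simp only [Finset.mem_filter, Finset.mem_Ico] at hn
    obtain ⟨⟨h1, h2⟩, h3, h4⟩ := hn
    simp only [Finset.mem_product, Finset.mem_range, Finset.mem_Ico]
    have he : (2*s*t+s+t) = (2*t+1)*s + t := by ring
    have hd : n / (2*t+1) ≤ s := by
      have h0 : n ≤ (2*t+1)*s + t := by omega
      have h0' := Nat.div_le_div_right (c := 2*t+1) h0
      have hq : ((2*t+1)*s + t)/(2*t+1) = s := by
        rw [Nat.mul_add_div (by omega)]
        simp [Nat.div_eq_of_lt (show t < 2*t+1 by omega)]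
      omega
    exact ⟨by omega, by omega, by omega⟩
  · intro ab hab
    simp only [Finset.mem_product, Finset.mem_range, Finset.mem_Ico] at hab
    obtain ⟨ha, hb1, hb2⟩ := hab
    simp only [Finset.mem_filter, Finset.mem_Ico]
    have hmod : (ab.2 + ab.1*(2*t+1)) % (2*t+1) = ab.2 := by
      rw [Nat.add_mul_mod_self_right, Nat.mod_eq_of_lt (by omega)]
    have hmul : ab.1*(2*t+1) ≤ s*(2*t+1) := Nat.mul_le_mul_right _ (by omega)
    have he : s*(2*t+1) = 2*s*t+s := by ring
    exact ⟨⟨by omega, by omega⟩, by omega, by omega⟩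
  · intro n hn
    exact Nat.mod_add_div' n (2*t+1)
  · intro ab hab
    simp only [Finset.mem_product, Finset.mem_range, Finset.mem_Ico] at hab
    have h1 : (ab.2 + ab.1*(2*t+1)) / (2*t+1) = ab.1 := by
      rw [Nat.add_mul_div_right _ _ (by omega), Nat.div_eq_of_lt (by omega), Nat.zero_add]
    have h2 : (ab.2 + ab.1*(2*t+1)) % (2*t+1) = ab.2 := by
      rw [Nat.add_mul_mod_self_right, Nat.mod_eq_of_lt (by omega)]
    exact Prod.ext h1 h2

lemma aux_count_neg (s t : ℕ) (hs : 1 ≤ s) (ht : 1 ≤ t) :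
    ((Finset.Ico 1 (2*s*t+s+t+1)).filter
      (fun n => ¬(1 ≤ n % (2*t+1) ∧ 2*(n % (2*t+1)) < 2*t+1))).card = s*(t+1) := by
  have h1 := Finset.card_filter_add_card_filter_not
      (s := Finset.Ico 1 (2*s*t+s+t+1))
      (p := fun n => 1 ≤ n % (2*t+1) ∧ 2*(n % (2*t+1)) < 2*t+1)
  have h2 := aux_count s t hs ht
  have h3 : (Finset.Ico 1 (2*s*t+s+t+1)).card = 2*s*t+s+t := by rw [Nat.card_Ico]; omega
  have e1 : (s+1)*t = s*t+t := by ring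
  have e2 : s*(t+1) = s*t+s := by ring
  have e3 : 2*s*t = 2*(s*t) := by ring
  omega

lemma mod_char (p q n : ℕ) (hp : Odd p) (hq : Odd q) (hp3 : 3 ≤ p) (hq1 : 1 ≤ q)
    (hn1 : 1 ≤ n) (hn2 : 2*n ≤ p*q) :
    ((0 < (p*n) % (p*q+1) ∧ 2*((p*n) % (p*q+1)) < p*q+1) ↔ (1 ≤ n % q ∧ 2*(n % q) < q))
    ∧ ((p*q+1 < 2*((p*n) % (p*q+1))) ↔ ¬(1 ≤ n % q ∧ 2*(n % q) < q)) := by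
  obtain ⟨s, rfl⟩ := hp
  obtain ⟨t, rfl⟩ := hq
  have hs1 : 1 ≤ s := by omega
  obtain ⟨a, b, hblt, hdm⟩ : ∃ a b, b < 2*t+1 ∧ (2*t+1)*a + b = n :=
    ⟨n/(2*t+1), n%(2*t+1), Nat.mod_lt n (by omega), Nat.div_add_mod n (2*t+1)⟩
  have hbmod : n % (2*t+1) = b := by
    rw [← hdm, Nat.mul_add_mod, Nat.mod_eq_of_lt hblt]
  rw [hbmod]
  have ha_le : a ≤ s := by
    have h1 : (2*t+1)*(2*a) ≤ (2*t+1)*(2*s+1) := by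
      have e1 : (2*t+1)*(2*a) = 2*((2*t+1)*a) := by ring
      have e2 : (2*t+1)*(2*s+1) = (2*s+1)*(2*t+1) := by ring
      omega
    have h2 := Nat.le_of_mul_le_mul_left h1 (by omega)
    omega
  by_cases hb0 : b = 0
  · subst hb0
    have ha1 : 1 ≤ a := by
      rcases Nat.eq_zero_or_pos a with h | h
      · subst h; simp at hdm; omega
      · exact h
    obtain ⟨a', rfl⟩ : ∃ a', a = a'+1 := ⟨a-1, by omega⟩
    have hple : 2*s+1 ≤ (2*s+1)*(2*t+1) := Nat.le_mul_of_pos_right _ (by omega)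
    have key : (2*s+1)*n = ((2*s+1)*(2*t+1)+1 - (a'+1)) + a'*((2*s+1)*(2*t+1)+1) := by
      have hn' : n = (2*t+1)*(a'+1) := by omega
      rw [hn']
      zify [show a'+1 ≤ (2*s+1)*(2*t+1)+1 by omega]
      ring
    have hr : ((2*s+1)*n) % ((2*s+1)*(2*t+1)+1) = (2*s+1)*(2*t+1)+1 - (a'+1) := by
      rw [key, Nat.add_mul_mod_self_right, Nat.mod_eq_of_lt (by omega)]
    rw [hr]
    omega
  · have hb1 : 1 ≤ b := by omega
    have hpb : 2*s+1 ≤ (2*s+1)*b := Nat.le_mul_of_pos_right _ (by omega)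
    have hpbq : (2*s+1)*b ≤ (2*s+1)*(2*t) := Nat.mul_le_mul_left _ (by omega)
    have e : (2*s+1)*(2*t+1) = (2*s+1)*(2*t) + (2*s+1) := by ring
    have key : (2*s+1)*n = ((2*s+1)*b - a) + a*((2*s+1)*(2*t+1)+1) := by
      have hn' : n = (2*t+1)*a + b := hdm.symm
      rw [hn']
      zify [show a ≤ (2*s+1)*b by omega]
      ring
    have hr : ((2*s+1)*n) % ((2*s+1)*(2*t+1)+1) = (2*s+1)*b - a := by
      rw [key, Nat.add_mul_mod_self_right, Nat.mod_eq_of_lt (by omega)]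
    rw [hr]
    rcases le_or_gt b t with hbt | hbt
    · have h2 : (2*s+1)*b ≤ (2*s+1)*t := Nat.mul_le_mul_left _ hbt
      have e2 : (2*s+1)*(2*t) = 2*((2*s+1)*t) := by ring
      omega
    · have h3 : (2*s+1)*(t+1) ≤ (2*s+1)*b := Nat.mul_le_mul_left _ (by omega)
      have e3 : (2*s+1)*(t+1) = (2*s+1)*t + (2*s+1) := by ring
      have e2 : (2*s+1)*(2*t) = 2*((2*s+1)*t) := by ring
      have hstrict : (2*s+1)*(2*t+1)+1 < 2*((2*s+1)*b - a) := by
        rcases Nat.lt_or_ge ((2*s+1)*(2*t+1)+1) (2*((2*s+1)*b - a)) with h | h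
        · exact h
        · exfalso
          have ha_eq : a = s := by omega
          have h4 : (2*s+1)*(2*b) = (2*s+1)*(2*t+2) := by
            have e4 : (2*s+1)*(2*b) = 2*((2*s+1)*b) := by ring
            have e5 : (2*s+1)*(2*t+2) = (2*s+1)*(2*t) + 2*(2*s+1) := by ring
            omega
          have hb_eq : 2*b = 2*t+2 := Nat.eq_of_mul_eq_mul_left (by omega) h4
          have e6 : 2*((2*t+1)*s) + (2*t+1) = (2*s+1)*(2*t+1) := by ring
          subst ha_eq
          omega
      omega

lemma reduce' (p d : ℕ) (hd : Odd d) (A : Finset (ZMod (d+1))) (B : Finset ℕ) (C : ℕ → Prop)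
    (hA : ∀ i : ZMod (d+1), i ∈ A ↔ ((i ≠ 0 ∧ i + i ≠ 0) ∧
      (0 < (-i).val ∧ 2 * (-i).val < d + 1) ∧ C ((-((p : ZMod (d+1)) * i)).val)))
    (hB : ∀ n : ℕ, n ∈ B ↔ (1 ≤ n ∧ 2*n ≤ d ∧ C ((p*n) % (d+1)))) :
    A.card = B.card := by
  have hd1 : 1 ≤ d := by rcases hd with ⟨k, hk⟩; omega
  have hv : ∀ b : ZMod (d+1), ((p : ZMod (d+1)) * b).val = (p * b.val) % (d+1) := by
    intro b
    rw [ZMod.val_mul, ZMod.val_natCast, Nat.mod_mul_mod]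
  apply Finset.card_bij' (fun a _ => (-a).val) (fun n _ => -((n : ℕ) : ZMod (d+1)))
  · intro a ha
    rw [hA] at ha
    obtain ⟨⟨h0, h00⟩, ⟨h1, h2⟩, h3⟩ := ha
    rw [hB]
    rw [show -((p : ZMod (d+1)) * a) = (p : ZMod (d+1)) * (-a) from (mul_neg _ _).symm, hv] at h3
    exact ⟨h1, by omega, h3⟩
  · intro n hn
    rw [hB] at hn
    obtain ⟨hn1, hn2, hC⟩ := hn
    have hlt : n < d + 1 := by omega
    have hval : ((n : ZMod (d+1))).val = n := ZMod.val_cast_of_lt hlt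
    rw [hA]
    refine ⟨⟨?_, ?_⟩, ⟨?_, ?_⟩, ?_⟩
    · simp only [ne_eq, neg_eq_zero]
      intro h
      rw [h, ZMod.val_zero] at hval
      omega
    · intro h
      have h' : ((n : ZMod (d+1)) + (n : ZMod (d+1))) = 0 := by
        have := congrArg Neg.neg h
        rwa [← neg_add, neg_neg, neg_zero] at this
      have hvadd : ((n : ZMod (d+1)) + (n : ZMod (d+1))).val = n + n :=
        by rw [ZMod.val_add_of_lt (by rw [hval]; omega), hval]
      rw [h', ZMod.val_zero] at hvadd
      omega
    · rw [neg_neg, hval]; omega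
    · rw [neg_neg, hval]; omega
    · rw [show -((p : ZMod (d+1)) * -((n : ℕ) : ZMod (d+1))) = (p : ZMod (d+1)) * ((n : ℕ) : ZMod (d+1)) by
        rw [mul_neg, neg_neg], hv, hval]
      exact hC
  · intro a ha
    rw [ZMod.natCast_val, ZMod.cast_id, neg_neg]
  · intro n hn
    rw [hB] at hn
    rw [neg_neg]
    exact ZMod.val_cast_of_lt (by omega)

/-- let `p` be an odd prime, `f ≥ 2`, `d = p^f + 1`, `S = ℤ/dℤ ∖ {0, d/2}`.
The number of `i ∈ S` whose pattern begins with the letters `lu` (i.e. `−i ∈ A` and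
`−p·i ∈ B`) is `((p−1)/2)·((p^(f−1)+1)/2)`, and the number of `i ∈ S` whose pattern
begins with `ll` (i.e. `−i ∈ A` and `−p·i ∈ A`) is `((p+1)/2)·((p^(f−1)−1)/2)`. -/
theorem count_patterns_first_two_letters (p f : ℕ) (hp : p.Prime) (hodd : Odd p)
    (hf : 2 ≤ f) :
    (Finset.univ.filter (fun i : ZMod (p ^ f + 1) =>
        (i ≠ 0 ∧ i + i ≠ 0) ∧
        (0 < (-i).val ∧ 2 * (-i).val < p ^ f + 1) ∧
        (p ^ f + 1 : ℕ) < 2 * (-((p : ZMod (p ^ f + 1)) * i)).val)).card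
      = ((p - 1) / 2) * ((p ^ (f - 1) + 1) / 2) ∧
    (Finset.univ.filter (fun i : ZMod (p ^ f + 1) =>
        (i ≠ 0 ∧ i + i ≠ 0) ∧
        (0 < (-i).val ∧ 2 * (-i).val < p ^ f + 1) ∧
        (0 < (-((p : ZMod (p ^ f + 1)) * i)).val ∧
          2 * (-((p : ZMod (p ^ f + 1)) * i)).val < p ^ f + 1))).card
      = ((p + 1) / 2) * ((p ^ (f - 1) - 1) / 2) := by
  have hp3 : 3 ≤ p := by
    rcases id hodd with ⟨k, hk⟩
    have := hp.two_le
    omega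
  have hfq : p ^ f = p * p ^ (f - 1) := by
    conv_lhs => rw [show f = (f-1)+1 by omega, pow_succ']
  have hqodd : Odd (p ^ (f-1)) := hodd.pow
  have hdodd : Odd (p ^ f) := hodd.pow
  have hq3 : 3 ≤ p ^ (f-1) := le_trans hp3 (Nat.le_self_pow (by omega) p)
  obtain ⟨s, hs⟩ := id hodd
  obtain ⟨t, ht⟩ := id hqodd
  have hs1 : 1 ≤ s := by omega
  have ht1 : 1 ≤ t := by omega
  have hbound : p ^ f = (2*s+1)*(2*t+1) := by rw [hfq, ht, hs]
  have e : (2*s+1)*(2*t+1) = 4*(s*t)+2*s+2*t+1 := by ring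
  have e' : 2*s*t = 2*(s*t) := by ring
  constructor
  · refine (reduce' p (p^f) hdodd _
        ((Finset.Ico 1 (2*s*t+s+t+1)).filter
          (fun n => ¬(1 ≤ n % (2*t+1) ∧ 2*(n % (2*t+1)) < 2*t+1)))
        (fun v => p ^ f + 1 < 2*v) (fun i => ?_) (fun n => ?_)).trans ?_
    · simp only [Finset.mem_filter, Finset.mem_univ, true_and]
    · simp only [Finset.mem_filter, Finset.mem_Ico]
      constructor
      · rintro ⟨⟨h1, h2⟩, h3⟩
        have h2n : 2*n ≤ p^f := by omega
        refine ⟨h1, h2n, ?_⟩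
        have mc := (mod_char p (p^(f-1)) n hodd hqodd hp3 (by omega) h1
          (by rw [← hfq]; exact h2n)).2
        rw [← hfq] at mc
        rw [ht] at mc
        exact mc.mpr h3
      · rintro ⟨h1, h2, h3⟩
        have mc := (mod_char p (p^(f-1)) n hodd hqodd hp3 (by omega) h1
          (by rw [← hfq]; exact h2)).2
        rw [← hfq] at mc
        rw [ht] at mc
        exact ⟨⟨h1, by omega⟩, mc.mp h3⟩
    · rw [aux_count_neg s t hs1 ht1, ht, hs]
      have d1 : (2*s+1-1)/2 = s := by omega
      have d2 : (2*t+1+1)/2 = t+1 := by omega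
      rw [d1, d2]
  · refine (reduce' p (p^f) hdodd _
        ((Finset.Ico 1 (2*s*t+s+t+1)).filter
          (fun n => 1 ≤ n % (2*t+1) ∧ 2*(n % (2*t+1)) < 2*t+1))
        (fun v => 0 < v ∧ 2*v < p ^ f + 1) (fun i => ?_) (fun n => ?_)).trans ?_
    · simp only [Finset.mem_filter, Finset.mem_univ, true_and]
    · simp only [Finset.mem_filter, Finset.mem_Ico]
      constructor
      · rintro ⟨⟨h1, h2⟩, h3⟩
        have h2n : 2*n ≤ p^f := by omega
        refine ⟨h1, h2n, ?_⟩
        have mc := (mod_char p (p^(f-1)) n hodd hqodd hp3 (by omega) h1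
          (by rw [← hfq]; exact h2n)).1
        rw [← hfq] at mc
        rw [ht] at mc
        exact mc.mpr h3
      · rintro ⟨h1, h2, h3⟩
        have mc := (mod_char p (p^(f-1)) n hodd hqodd hp3 (by omega) h1
          (by rw [← hfq]; exact h2)).1
        rw [← hfq] at mc
        rw [ht] at mc
        exact ⟨⟨h1, by omega⟩, mc.mp h3⟩
    · rw [aux_count s t hs1 ht1, ht, hs]
      have d1 : (2*s+1+1)/2 = s+1 := by omega
      have d2 : (2*t+1-1)/2 = t := by omega
      rw [d1, d2]
end

section
/- The number of elements i ∈ S such that −i ∈ B and −p^{2f−1}·i ∈ A (equivalently, the i ∈ S whose associated word begins with the letter u and ends with the letter l) equals ((p−1)/2)·((p^{f−1}+1)/2). -/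
open scoped Classical

/-- let `p` be an odd prime, `f ≥ 1`, `d = p^f + 1`, `S = ℤ/dℤ ∖ {0, d/2}`.
The number of `i ∈ S` with `−i ∈ B` and `−p^(2f−1)·i ∈ A` (i.e. those whose word begins
with `u` and ends with `l`) equals `((p−1)/2)·((p^(f−1)+1)/2)`. -/
theorem count_words_u_start_l_end (p f : ℕ) (hp : p.Prime) (hodd : Odd p) (hf : 1 ≤ f) :
    (Finset.univ.filter (fun i : ZMod (p ^ f + 1) =>
        (i ≠ 0 ∧ i + i ≠ 0) ∧
        (p ^ f + 1 : ℕ) < 2 * (-i).val ∧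
        (0 < (-((p : ZMod (p ^ f + 1)) ^ (2 * f - 1) * i)).val ∧
          2 * (-((p : ZMod (p ^ f + 1)) ^ (2 * f - 1) * i)).val < p ^ f + 1))).card
      = ((p - 1) / 2) * ((p ^ (f - 1) + 1) / 2) := by
  have hPodd : Odd (p ^ (f - 1)) := hodd.pow
  obtain ⟨s, hs0⟩ := hodd
  have hs : p = 2 * s + 1 := by omega
  obtain ⟨u, hu0⟩ := hPodd
  have hu : p ^ (f - 1) = 2 * u + 1 := by omega
  have hp2 : 2 ≤ p := hp.two_le
  have hs1 : 1 ≤ s := by omega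
  have hpf : p ^ f = (2 * s + 1) * (2 * u + 1) := by
    conv_lhs => rw [show f = (f - 1) + 1 by omega, pow_succ, hu, hs]
    ring
  set d := p ^ f + 1 with hdd
  have hd : d = 4 * (s * u) + 2 * s + 2 * u + 2 := by rw [hdd, hpf]; ring
  have hd2 : 4 ≤ d := by omega
  haveI : NeZero d := ⟨by omega⟩
  have hcast : (p : ZMod d) ^ f = -1 := by
    have h0 : ((p ^ f + 1 : ℕ) : ZMod d) = 0 := by
      rw [← hdd]; exact ZMod.natCast_self d
    push_cast at h0
    linear_combination h0
  have hpinv : (p : ZMod d) ^ (2 * f - 1) * (p : ZMod d) = 1 := by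
    rw [← pow_succ, show 2 * f - 1 + 1 = f + f by omega, pow_add, hcast]
    ring
  -- the bijection parameter map
  set K : ℕ → ℕ → ℕ := fun q t => 2 * q * u + q + u + 1 + t with hK
  have hKval : ∀ q t, K q t = 2 * (q * u) + q + u + 1 + t := by
    intro q t
    show 2 * q * u + q + u + 1 + t = _
    ring
  have hKlt : ∀ q t, q < s → t < u + 1 → 2 * K q t < d := by
    intro q t hq ht
    have hqu : q * u + u ≤ s * u := by
      have h := mul_le_mul_left (show q + 1 ≤ s by omega) u
      rwa [add_one_mul] at h
    have := hKval q t
    omega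
  -- the image description
  have himg : (Finset.univ.filter (fun i : ZMod d =>
        (i ≠ 0 ∧ i + i ≠ 0) ∧
        (d : ℕ) < 2 * (-i).val ∧
        (0 < (-((p : ZMod d) ^ (2 * f - 1) * i)).val ∧
          2 * (-((p : ZMod d) ^ (2 * f - 1) * i)).val < d)))
      = (Finset.range s ×ˢ Finset.range (u + 1)).image
          (fun qt : ℕ × ℕ => -(((p * K qt.1 qt.2 : ℕ) : ZMod d))) := by
    ext i
    simp only [Finset.mem_filter, Finset.mem_univ, true_and, Finset.mem_image,
      Finset.mem_product, Finset.mem_range]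
    constructor
    · rintro ⟨⟨hi0, hii⟩, hB, hA0, hA2⟩
      set x := -((p : ZMod d) ^ (2 * f - 1) * i) with hx
      set k := x.val with hkdef
      have hxk : ((k : ℕ) : ZMod d) = x := ZMod.natCast_rightInverse x
      have hpkcast : ((p * k : ℕ) : ZMod d) = -i := by
        push_cast
        rw [hxk, hx]
        linear_combination (-i) * hpinv
      obtain ⟨q, r, hqr, hrd⟩ : ∃ q r, d * q + r = p * k ∧ r < d :=
        ⟨(p * k) / d, (p * k) % d, Nat.div_add_mod (p * k) d, Nat.mod_lt _ (by omega)⟩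
      have hmod : (p * k) % d = r := by
        rw [← hqr, Nat.add_comm, Nat.add_mul_mod_self_left, Nat.mod_eq_of_lt hrd]
      have hvalneg : (-i).val = r := by rw [← hpkcast, ZMod.val_natCast, hmod]
      have hdr : d < 2 * r := by rw [hvalneg] at hB; exact hB
      have hk2 : 2 * k < d := hA2
      have hq : q < s := by
        by_contra hc
        push_neg at hc
        have h1 : d * s ≤ d * q := Nat.mul_le_mul_left d hc
        have h2 : p * (2 * k + 1) ≤ p * d := Nat.mul_le_mul_left p (by omega)
        have h3 : p * (2 * k + 1) = 2 * (p * k) + p := by ring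
        have h4 : p * d = 2 * (d * s) + d := by rw [hs]; ring
        omega
      have hlow : 2 * (q * u) + q + u + 1 ≤ k := by
        have hid1 : p * (2 * (q * u) + q + u) + (q + s + 1)
            = d * q + (2 * (s * u) + s + u + 1) := by rw [hs, hd]; ring
        have hm : 2 * (s * u) + s + u + 1 < r := by omega
        have hlt : p * (2 * (q * u) + q + u) < p * k := by omega
        have := Nat.lt_of_mul_lt_mul_left hlt
        omega
      have hup : k ≤ 2 * (q * u) + q + u + 1 + u := by
        have hid2 : p * (2 * (q * u) + q + 2 * u + 2) + q = d * q + d + 2 * s := by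
          rw [hs, hd]; ring
        have hlt : p * k < p * (2 * (q * u) + q + 2 * u + 2) := by omega
        have := Nat.lt_of_mul_lt_mul_left hlt
        omega
      refine ⟨⟨q, k - (2 * (q * u) + q + u + 1)⟩, ⟨hq, by omega⟩, ?_⟩
      have hKk : K q (k - (2 * (q * u) + q + u + 1)) = k := by
        have := hKval q (k - (2 * (q * u) + q + u + 1))
        omega
      rw [hKk, hpkcast, neg_neg]
    · rintro ⟨⟨q, t⟩, ⟨hq0, ht0⟩, rfl⟩
      dsimp only at hq0 ht0 ⊢
      have hq : q < s := hq0
      have ht : t < u + 1 := ht0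
      have hk2 : 2 * K q t < d := hKlt q t hq ht
      set k := K q t with hkdef
      have hkval : k = 2 * (q * u) + q + u + 1 + t := hKval q t
      have hst : s * t ≤ s * u := mul_le_mul_right (by omega) s
      have hk0 : 0 < k := by omega
      have hkd : k < d := by omega
      have hqle : q ≤ p * u + p + 2 * (s * t) + t := by omega
      obtain ⟨R, hR⟩ := Nat.exists_eq_add_of_le hqle
      have hkey : p * k + q = d * q + (p * u + p + 2 * (s * t) + t) := by
        rw [hkval, hs, hd]; ring
      have hpu : p * u = 2 * (s * u) + u := by rw [hs]; ring
      have hpk_eq : p * k = d * q + R := by omega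
      have hRd : R < d := by omega
      have hRgt : d < 2 * R := by omega
      have hpk_eq' : p * k = R + d * q := by omega
      have hvalpk : ((p * k : ℕ) : ZMod d).val = R := by
        rw [ZMod.val_natCast, hpk_eq', Nat.add_mul_mod_self_left, Nat.mod_eq_of_lt hRd]
      have hXcast : -((p : ZMod d) ^ (2 * f - 1) * -(((p * k : ℕ) : ZMod d)))
          = ((k : ℕ) : ZMod d) := by
        push_cast
        linear_combination (k : ZMod d) * hpinv
      refine ⟨⟨?_, ?_⟩, ?_, ?_⟩
      · intro h
        have h1 : ((p * k : ℕ) : ZMod d) = 0 := by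
          rw [← neg_neg ((p * k : ℕ) : ZMod d), h, neg_zero]
        have := (ZMod.val_eq_zero _).mpr h1
        omega
      · intro h
        have h2 : ((2 * (p * k) : ℕ) : ZMod d) = 0 := by
          push_cast at h ⊢
          linear_combination -h
        have hdvd : d ∣ 2 * (p * k) := (ZMod.natCast_eq_zero_iff _ _).mp h2
        have hdvd2 : d ∣ 2 * R := by
          have he : 2 * (p * k) = d * (2 * q) + 2 * R := by rw [hpk_eq]; ring
          rw [he] at hdvd
          exact (Nat.dvd_add_right ⟨2 * q, rfl⟩).mp hdvd
        obtain ⟨c, hc⟩ := hdvd2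
        rcases c with _ | _ | c
        · omega
        · omega
        · have he2 : d * (c + 2) = d * c + 2 * d := by ring
          rw [he2] at hc
          have := Nat.zero_le (d * c)
          omega
      · rw [neg_neg, hvalpk]
        omega
      · rw [hXcast, ZMod.val_natCast_of_lt hkd]
        exact ⟨hk0, by omega⟩
  have hinj : Set.InjOn (fun qt : ℕ × ℕ => -(((p * K qt.1 qt.2 : ℕ) : ZMod d)))
      ↑(Finset.range s ×ˢ Finset.range (u + 1)) := by
    rintro ⟨q₁, t₁⟩ h₁ ⟨q₂, t₂⟩ h₂ heq
    simp only [Finset.mem_coe, Finset.mem_product, Finset.mem_range] at h₁ h₂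
    obtain ⟨hq₁, ht₁⟩ := h₁
    obtain ⟨hq₂, ht₂⟩ := h₂
    have heq2 : -(((p * K q₁ t₁ : ℕ) : ZMod d)) = -(((p * K q₂ t₂ : ℕ) : ZMod d)) := heq
    have heq' : ((p * K q₁ t₁ : ℕ) : ZMod d) = ((p * K q₂ t₂ : ℕ) : ZMod d) :=
      neg_inj.mp heq2
    have hkcast : ((K q₁ t₁ : ℕ) : ZMod d) = ((K q₂ t₂ : ℕ) : ZMod d) := by
      push_cast at heq' ⊢
      linear_combination (p : ZMod d) ^ (2 * f - 1) * heq'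
        - (((K q₁ t₁ : ℕ) : ZMod d) - ((K q₂ t₂ : ℕ) : ZMod d)) * hpinv
    have hK1lt : K q₁ t₁ < d := by have := hKlt q₁ t₁ hq₁ ht₁; omega
    have hK2lt : K q₂ t₂ < d := by have := hKlt q₂ t₂ hq₂ ht₂; omega
    have hKeq : K q₁ t₁ = K q₂ t₂ := by
      rw [← ZMod.val_natCast_of_lt hK1lt, ← ZMod.val_natCast_of_lt hK2lt, hkcast]
    have hkv : 2 * (q₁ * u) + q₁ + u + 1 + t₁ = 2 * (q₂ * u) + q₂ + u + 1 + t₂ := by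
      rw [← hKval q₁ t₁, ← hKval q₂ t₂]; exact hKeq
    have hqeq : q₁ = q₂ := by
      rcases lt_trichotomy q₁ q₂ with h | h | h
      · exfalso
        have h1 : q₁ * u + u ≤ q₂ * u := by
          have hm := mul_le_mul_left (show q₁ + 1 ≤ q₂ by omega) u
          rwa [add_one_mul] at hm
        omega
      · exact h
      · exfalso
        have h1 : q₂ * u + u ≤ q₁ * u := by
          have hm := mul_le_mul_left (show q₂ + 1 ≤ q₁ by omega) u
          rwa [add_one_mul] at hm
        omega
    subst hqeq
    have hteq : t₁ = t₂ := by omega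
    rw [hteq]
  rw [himg, Finset.card_image_of_injOn hinj, Finset.card_product,
    Finset.card_range, Finset.card_range, hu]
  have e1 : (p - 1) / 2 = s := by omega
  have e2 : (2 * u + 1 + 1) / 2 = u + 1 := by omega
  rw [e1, e2]
end

section
/- Suppose d > 2, p does not divide d, and d divides p^f+1 for some f ≥ 1. Let i ∈ ℤ/dℤ with i ≠ 0 and 2i ≠ 0, and let m be the size of the orbit of i under multiplication by p. Then m is even, p^{m/2}·i = −i, and for every j with 1 ≤ j ≤ m/2 one has −p^{j−1}·i ∈ A if and only if −p^{m/2+j−1}·i ∈ B. In other words, the second half of the word of the orbit of i is the letter-by-letter complement of the first half (the orbit is complementary). -/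
open scoped Classical

/-- The size of the orbit of `i ∈ ℤ/dℤ` under multiplication by `p`. -/
noncomputable def orbSize (p d : ℕ) [NeZero d] (i : ZMod d) : ℕ :=
  (Finset.image (fun j : ℕ => (p : ZMod d) ^ j * i) (Finset.range d)).card

/-- suppose `p` is an odd prime, `d > 2`, `p ∤ d` and `d ∣ p^f + 1`.
Let `i ∈ ℤ/dℤ` with `i ≠ 0` and `2i ≠ 0`, and let `m` be the size of the orbit of `i`
under multiplication by `p`.  Then `m` is even, `p^(m/2)·i = −i`, and for `1 ≤ j ≤ m/2`
one has `−p^(j−1)·i ∈ A` iff `−p^(m/2+j−1)·i ∈ B`; i.e. the second half of the word of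
the orbit of `i` is the letter-by-letter complement of the first half. -/
theorem orbit_complementary (p d f : ℕ) [NeZero d] (hp : p.Prime) (hodd : Odd p)
    (hd : 2 < d) (hpd : ¬ p ∣ d) (hf : 1 ≤ f) (hdvd : d ∣ p ^ f + 1)
    (i : ZMod d) (hi : i ≠ 0) (h2i : i + i ≠ 0) :
    Even (orbSize p d i) ∧
    (p : ZMod d) ^ (orbSize p d i / 2) * i = -i ∧
    (∀ j, 1 ≤ j → j ≤ orbSize p d i / 2 →
      ((0 < (-((p : ZMod d) ^ (j - 1) * i)).val ∧
          2 * (-((p : ZMod d) ^ (j - 1) * i)).val < d) ↔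
        (d : ℕ) < 2 * (-((p : ZMod d) ^ (orbSize p d i / 2 + j - 1) * i)).val)) := by
  classical
  set q : ZMod d := (p : ZMod d) with hqdef
  have hunit : IsUnit q := (ZMod.isUnit_prime_iff_not_dvd hp).mpr hpd
  -- q^f * i = -i
  have hqf : q ^ f * i = -i := by
    have h0 : ((p ^ f + 1 : ℕ) : ZMod d) = 0 :=
      (ZMod.natCast_eq_zero_iff _ d).mpr hdvd
    push_cast at h0
    have hqf' : q ^ f = -1 := by linear_combination h0
    rw [hqf']; ring
  set g : ZMod d → ZMod d := fun x => q * x with hgdef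
  have hiter : ∀ (n : ℕ) (x : ZMod d), g^[n] x = q ^ n * x := by
    intro n
    induction n with
    | zero => intro x; simp
    | succ k ih =>
        intro x
        rw [Function.iterate_succ_apply, ih]
        show q ^ k * (q * x) = q ^ (k + 1) * x
        ring
  have hper2f : Function.IsPeriodicPt g (2 * f) i := by
    show g^[2 * f] i = i
    rw [hiter]
    have : q ^ (2 * f) * i = q ^ f * (q ^ f * i) := by ring
    rw [this, hqf, mul_neg, hqf, neg_neg]
  set m₀ := Function.minimalPeriod g i with hm₀def
  have hm₀pos : 0 < m₀ := hper2f.minimalPeriod_pos (by omega)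
  have hperiodic : ∀ n : ℕ, q ^ n * i = i ↔ m₀ ∣ n := by
    intro n
    rw [← hiter]
    exact Function.isPeriodicPt_iff_minimalPeriod_dvd
  -- injectivity on [0, m₀)
  have hinj : ∀ a b : ℕ, a < m₀ → b < m₀ → q ^ a * i = q ^ b * i → a = b := by
    have key : ∀ a b : ℕ, a ≤ b → b < m₀ → q ^ a * i = q ^ b * i → a = b := by
      intro a b hab hb h
      have : q ^ a * (q ^ (b - a) * i) = q ^ a * i := by
        rw [← mul_assoc, ← pow_add]
        rw [show a + (b - a) = b by omega]
        exact h.symm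
      have h' : q ^ (b - a) * i = i := (hunit.pow a).mul_left_cancel this
      have hba := Nat.eq_zero_of_dvd_of_lt ((hperiodic _).mp h') (by omega)
      omega
    intro a b ha hb h
    rcases le_total a b with hab | hab
    · exact key a b hab hb h
    · exact (key b a hab ha h.symm).symm
  -- orbSize = m₀
  have hcard : orbSize p d i = m₀ := by
    have him : Finset.image (fun j : ℕ => q ^ j * i) (Finset.range m₀) =
        Finset.image (fun j : ℕ => q ^ j * i) (Finset.range d) := by
      apply Finset.Subset.antisymm
      · -- m₀ ≤ d follows from injectivity
        have hm₀led : m₀ ≤ d := by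
          have h1 : (Finset.image (fun j : ℕ => q ^ j * i) (Finset.range m₀)).card = m₀ := by
            rw [Finset.card_image_of_injOn, Finset.card_range]
            intro a ha b hb h
            simp only [Finset.coe_range, Set.mem_Iio] at ha hb
            exact hinj a b ha hb h
          calc m₀ = _ := h1.symm
            _ ≤ (Finset.univ : Finset (ZMod d)).card := Finset.card_le_card (Finset.subset_univ _)
            _ = d := by simp [ZMod.card]
        apply Finset.image_subset_image
        exact Finset.range_subset_range.mpr hm₀led
      · intro x hx
        simp only [Finset.mem_image, Finset.mem_range] at hx ⊢
        obtain ⟨j, hj, rfl⟩ := hx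
        refine ⟨j % m₀, Nat.mod_lt _ hm₀pos, ?_⟩
        rw [← hiter, ← hiter]
        exact Function.iterate_mod_minimalPeriod_eq
    unfold orbSize
    rw [← hqdef, ← him, Finset.card_image_of_injOn, Finset.card_range]
    intro a ha b hb h
    simp only [Finset.coe_range, Set.mem_Iio] at ha hb
    exact hinj a b ha hb h
  -- powers of m₀ fix i
  have hfix : ∀ c : ℕ, q ^ (m₀ * c) * i = i := fun c => (hperiodic _).mpr ⟨c, rfl⟩
  -- divisibility facts
  have hdvd2f : m₀ ∣ 2 * f := hper2f.minimalPeriod_dvd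
  have hndvdf : ¬ m₀ ∣ f := by
    rintro ⟨c, hfc⟩
    have h1 : q ^ f * i = i := by rw [hfc]; exact hfix c
    rw [hqf] at h1
    exact h2i (by linear_combination -h1)
  obtain ⟨k, hk⟩ := hdvd2f
  have hkodd : ¬ 2 ∣ k := by
    rintro ⟨c, rfl⟩
    have h2 : m₀ * (2 * c) = 2 * (m₀ * c) := by ring
    exact hndvdf ⟨c, by omega⟩
  have hm₀even : 2 ∣ m₀ := by
    by_contra h
    have hco : Nat.Coprime m₀ 2 := Nat.coprime_two_right.mpr (Nat.odd_iff.mpr (by omega))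
    exact hndvdf (hco.dvd_of_dvd_mul_left ⟨k, by omega⟩)
  obtain ⟨m', hm'⟩ := hm₀even
  have hfm : f = m' * k := by
    have h2 : m₀ * k = 2 * (m' * k) := by rw [hm']; ring
    omega
  obtain ⟨c, hc⟩ : ∃ c, k = 2 * c + 1 := ⟨k / 2, by omega⟩
  -- q^{m'} * i = -i
  have hhalf : q ^ m' * i = -i := by
    have h1 : q ^ f * i = q ^ m' * (q ^ (m₀ * c) * i) := by
      rw [← mul_assoc, ← pow_add]
      congr 2
      have h2 : m' * k = m' + m₀ * c := by rw [hm', hc]; ring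
      omega
    rw [hfix, hqf] at h1
    exact h1.symm
  have hhalf' : orbSize p d i / 2 = m' := by omega
  refine ⟨by rw [hcard]; exact ⟨m', by omega⟩, by rw [hhalf']; exact hhalf, ?_⟩
  intro j hj1 hj2
  rw [hhalf'] at hj2 ⊢
  set x : ZMod d := -(q ^ (j - 1) * i) with hxdef
  have hxne : x ≠ 0 := by
    intro h
    have h' : q ^ (j - 1) * i = 0 := by rwa [hxdef, neg_eq_zero] at h
    exact hi ((hunit.pow (j - 1)).mul_left_cancel (by rw [h', mul_zero]))
  have hxx : x + x ≠ 0 := by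
    intro h
    apply h2i
    have h1 : q ^ (j - 1) * (i + i) = 0 := by
      have : q ^ (j - 1) * (i + i) = -(x + x) := by rw [hxdef]; ring
      rw [this, h, neg_zero]
    exact (hunit.pow (j - 1)).mul_left_cancel (by rw [h1, mul_zero])
  have hsnd : -((p : ZMod d) ^ (m' + j - 1) * i) = -x := by
    rw [← hqdef, hxdef, neg_neg]
    rw [show m' + j - 1 = (j - 1) + m' by omega, pow_add, mul_assoc, hhalf]
    ring
  rw [hsnd]
  have hnegval : (-x).val = d - x.val := by
    rw [ZMod.neg_val, if_neg hxne]
  have hxlt : x.val < d := ZMod.val_lt x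
  have hxne' : x.val ≠ 0 := fun h => hxne (by rwa [← ZMod.val_eq_zero])
  have hx2 : 2 * x.val ≠ d := by
    intro h
    apply hxx
    have : x + x = ((x.val + x.val : ℕ) : ZMod d) := by
      push_cast
      rw [ZMod.natCast_val, ZMod.cast_id]
    rw [this, show x.val + x.val = d by omega]
    exact ZMod.natCast_self d
  rw [hnegval]
  omega
end

section
/- Let w = w_1⋯w_{2n} be a word of even length 2n in the alphabet {u,l} such that the second half is the letter-by-letter complement of the first half (for each 1 ≤ j ≤ n, exactly one of w_j, w_{n+j} is u) and such that the associated sequence satisfies a_j ≥ 0 for all 0 ≤ j ≤ 2n. Then ∑_{j=1}^{2n} a_j = n · max_{0≤j≤2n} a_j. -/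
set_option linter.unnecessarySeqFocus false

/-- The sequence attached to a word `w` in the alphabet `{u, l}` (1-based; `true = u`):
`a_0 = 0` and `a_j = a_(j−1) + 1` if `w_j = u`, `a_j = a_(j−1) − 1` if `w_j = l`. -/
def aWord (w : ℕ → Bool) : ℕ → ℤ
  | 0 => 0
  | j + 1 => aWord w j + (if w (j + 1) then 1 else -1)

lemma aWord_key (n : ℕ) (w : ℕ → Bool)
    (hcomp : ∀ j, 1 ≤ j → j ≤ n → w j ≠ w (n + j)) :
    ∀ j, j ≤ n → aWord w (n + j) = aWord w n - aWord w j := by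
  intro j
  induction j with
  | zero => simp [aWord]
  | succ k ih =>
    intro hk
    have hk' : k ≤ n := Nat.le_of_succ_le hk
    have h1 : n + (k + 1) = (n + k) + 1 := by ring
    have hc := hcomp (k + 1) (Nat.succ_le_succ (Nat.zero_le _)) hk
    rw [h1]
    show aWord w (n + k) + (if w ((n + k) + 1) then 1 else -1) = _
    have h2 : (n + k) + 1 = n + (k + 1) := by ring
    rw [h2, ih hk']
    show _ = aWord w n - (aWord w k + (if w (k + 1) then 1 else -1))
    cases hwk : w (k + 1) <;> cases hwn : w (n + (k + 1)) <;>
      simp_all <;> ring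

/-- let `w = w_1 ⋯ w_(2n)` be a word of even length `2n` whose second half
is the letter-by-letter complement of the first half, and whose associated sequence
satisfies `a_j ≥ 0` for all `0 ≤ j ≤ 2n`.  Then `∑_{j=1}^{2n} a_j = n · max_j a_j`. -/
theorem complementary_word_height_sum (n : ℕ) (w : ℕ → Bool)
    (hcomp : ∀ j, 1 ≤ j → j ≤ n → w j ≠ w (n + j))
    (hpos : ∀ j, j ≤ 2 * n → 0 ≤ aWord w j) :
    ∑ j ∈ Finset.Icc 1 (2 * n), aWord w j
      = (n : ℤ) * (Finset.range (2 * n + 1)).sup' Finset.nonempty_range_add_one (aWord w) := by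
  have key := aWord_key n w hcomp
  -- every a_j ≤ a_n
  have hle : ∀ j, j ≤ 2 * n → aWord w j ≤ aWord w n := by
    intro j hj
    rcases le_or_gt j n with h | h
    · have h0 : 0 ≤ aWord w (n + j) := hpos _ (by omega)
      have := key j h
      omega
    · have hk : j - n ≤ n := by omega
      have heq : aWord w j = aWord w n - aWord w (j - n) := by
        have := key (j - n) hk
        rwa [Nat.add_sub_cancel' h.le] at this
      have h0 : 0 ≤ aWord w (j - n) := hpos _ (by omega)
      omega
  have hsup : (Finset.range (2 * n + 1)).sup' Finset.nonempty_range_add_one (aWord w)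
      = aWord w n := by
    apply le_antisymm
    · exact Finset.sup'_le _ _ fun j hj => hle j (by
        simpa using Nat.lt_succ_iff.mp (Finset.mem_range.mp hj))
    · exact Finset.le_sup' _ (Finset.mem_range.mpr (by omega))
  rw [hsup]
  have hsplit : Finset.Icc 1 (2 * n) = Finset.Ioc 0 (2 * n) := by
    ext x; simp [Nat.lt_iff_add_one_le]
  rw [hsplit, ← Finset.sum_Ioc_consecutive _ (Nat.zero_le n) (by omega : n ≤ 2 * n)]
  have hmap : Finset.Ioc n (2 * n) = (Finset.Ioc 0 n).map (addLeftEmbedding n) := by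
    rw [Finset.map_add_left_Ioc]; congr 1 <;> omega
  rw [hmap, Finset.sum_map]
  have : ∀ j ∈ Finset.Ioc 0 n, aWord w (addLeftEmbedding n j) = aWord w n - aWord w j := by
    intro j hj
    exact key j (Finset.mem_Ioc.mp hj).2
  rw [Finset.sum_congr rfl this, Finset.sum_sub_distrib]
  have hcard : (Finset.Ioc 0 n).card = n := by simp
  rw [Finset.sum_const, hcard]
  ring
end

section
/- In the polynomial ring 𝔽_p[u], for every odd prime p and every f ≥ 1, the polynomial (1+u)^{(p^f+p)/2} − (1+u)^{(p^f+1)/2} − u^p·(1+u)^{p(p^f−1)/2} + u·(1+u)^{(p^f−1)/2} is congruent to (1+u)^{(p^f−p)/2}·(1 − (1+u)^{(p−1)/2}) modulo u^{p^f+1}; that is, u^{p^f+1} divides their difference in 𝔽_p[u]. -/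
open Polynomial

theorem key_lemma (p : ℕ) [Fact p.Prime] (f a b : ℕ) (hpb : p = 2*b+1) (hq : p^f = 2*a+1)
    (hab : b ≤ a) :
    (X : (ZMod p)[X]) ^ (2*a + 2) ∣
      ((1 + X) ^ (a+b+1) - (1 + X) ^ (a+1)
          - X ^ p * (1 + X) ^ (a*p) + X * (1 + X) ^ a)
        - (1 + X) ^ (a-b) * (1 - (1 + X) ^ b) := by
  have hX1 : IsCoprime (X : (ZMod p)[X]) (1 + X) := ⟨-1, 1, by ring⟩
  have h2 : ((1:(ZMod p)[X]) + X) ^ p = 1 + X ^ p := by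
    rw [add_pow_char]; simp
  have h1 : ((1:(ZMod p)[X]) + X) ^ (a-b) * (1+X) ^ b = (1+X) ^ a := by
    rw [← pow_add, Nat.sub_add_cancel hab]
  have h3 : ((1:(ZMod p)[X]) + X) ^ (a+b+1) * (1+X) ^ b = (1+X)^a * (1 + X^p) := by
    rw [← pow_add, show a+b+1+b = a + p from by omega, pow_add, h2]
  -- key divisibility
  have hq1 : ((1:(ZMod p)[X]) + X) ^ (p^f) = 1 + X ^ (p^f) := by
    rw [add_pow_char_pow]; simp
  have hq2 : ((1:(ZMod p)[X]) + X) ^ (p^(f+1)) = 1 + X ^ (p^(f+1)) := by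
    rw [add_pow_char_pow]; simp
  set A : (ZMod p)[X] := (1+X)^a with hA
  set B : (ZMod p)[X] := (1+X)^b with hB
  have hmul : (A - (1+X)^(a*p) * B) * ((A + (1+X)^(a*p) * B) * (1+X))
      = X ^ (p^f) - X ^ (p^(f+1)) := by
    have e1 : ((1:(ZMod p)[X]) + X) ^ (p^f) = A * A * (1+X) := by
      rw [hq, hA]; ring
    have e2 : ((1:(ZMod p)[X]) + X) ^ (p^(f+1)) =
        (1+X)^(a*p) * (1+X)^(a*p) * B * B * (1+X) := by
      rw [show p^(f+1) = a*p + a*p + b + b + 1 from by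
        rw [pow_succ, hq]; rw [hpb] at *; ring, hB]; ring
    rw [show (X:(ZMod p)[X])^(p^f) - X^(p^(f+1)) = (1 + X^(p^f)) - (1 + X^(p^(f+1))) from by
      ring, ← hq1, ← hq2, e1, e2]
    ring
  have hdvd1 : (X : (ZMod p)[X]) ^ (2*a+1) ∣ (A - (1+X)^(a*p) * B) := by
    have hdvd : (X : (ZMod p)[X]) ^ (2*a+1) ∣
        (A - (1+X)^(a*p) * B) * ((A + (1+X)^(a*p) * B) * (1+X)) := by
      rw [hmul, ← hq]
      exact dvd_sub (dvd_refl _) (pow_dvd_pow _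
        (Nat.pow_le_pow_right (by have := (Fact.out : p.Prime).two_le; omega) (Nat.le_succ f)))
    have hcop : IsCoprime ((X : (ZMod p)[X]) ^ (2*a+1)) ((A + (1+X)^(a*p) * B) * (1+X)) := by
      refine IsCoprime.pow_left (IsCoprime.mul_right ?_ hX1)
      rw [(Polynomial.irreducible_X (R := ZMod p)).coprime_iff_not_dvd, X_dvd_iff]
      have : (A + (1+X)^(a*p) * B).coeff 0 = 2 := by
        rw [coeff_zero_eq_eval_zero]
        simp [hA, hB]
        norm_num
      rw [this]
      intro h
      have h2 : ((2:ℕ) : ZMod p) = 0 := by exact_mod_cast h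
      have hdd := (ZMod.natCast_eq_zero_iff 2 p).mp h2
      have hle := Nat.le_of_dvd (by norm_num) hdd
      have hp2 := (Fact.out : p.Prime).two_le
      omega
    exact hcop.dvd_of_dvd_mul_right hdvd
  have hD : (((1 + X) ^ (a+b+1) - (1 + X) ^ (a+1)
          - X ^ p * (1 + X) ^ (a*p) + X * (1 + X) ^ a)
        - (1 + X) ^ (a-b) * (1 - (1 + X) ^ b)) * B
      = X ^ p * (A - (1+X)^(a*p) * B) := by
    rw [hA, hB]
    linear_combination h3 + ((1+X:(ZMod p)[X])^b - 1) * h1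
  have hfinal : (X : (ZMod p)[X]) ^ (2*a+2) ∣ (((1 + X) ^ (a+b+1) - (1 + X) ^ (a+1)
          - X ^ p * (1 + X) ^ (a*p) + X * (1 + X) ^ a)
        - (1 + X) ^ (a-b) * (1 - (1 + X) ^ b)) * B := by
    rw [hD]
    have hple : 2*a+2 ≤ p + (2*a+1) := by
      have := (Fact.out : p.Prime).two_le; omega
    calc (X : (ZMod p)[X]) ^ (2*a+2) ∣ X ^ (p + (2*a+1)) := pow_dvd_pow _ hple
      _ ∣ X ^ p * (A - (1+X)^(a*p) * B) := by
          rw [pow_add]; exact mul_dvd_mul_left _ hdvd1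
  exact (hX1.pow (n := b)).dvd_of_dvd_mul_right hfinal

/-- In `𝔽_p[u]`, for an odd prime `p` and `f ≥ 1`, the polynomial
`(1+u)^((p^f+p)/2) − (1+u)^((p^f+1)/2) − u^p·(1+u)^(p(p^f−1)/2) + u·(1+u)^((p^f−1)/2)`
is congruent to `(1+u)^((p^f−p)/2)·(1 − (1+u)^((p−1)/2))` modulo `u^(p^f+1)`. -/
theorem legendre_broumas_congruence (p f : ℕ) [Fact p.Prime] (hp : Odd p) (hf : 1 ≤ f) :
    (X : (ZMod p)[X]) ^ (p ^ f + 1) ∣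
      ((1 + X) ^ ((p ^ f + p) / 2) - (1 + X) ^ ((p ^ f + 1) / 2)
          - X ^ p * (1 + X) ^ ((p * (p ^ f - 1)) / 2) + X * (1 + X) ^ ((p ^ f - 1) / 2))
        - (1 + X) ^ ((p ^ f - p) / 2) * (1 - (1 + X) ^ ((p - 1) / 2)) := by
  obtain ⟨b, hb⟩ := hp
  have hq : Odd (p ^ f) := (Odd.pow ⟨b, hb⟩)
  obtain ⟨a, ha⟩ := hq
  have hpf : p ≤ p ^ f := Nat.le_self_pow (by omega) p
  have hab : b ≤ a := by omega
  have e1 : (p ^ f + p) / 2 = a + b + 1 := by omega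
  have e2 : (p ^ f + 1) / 2 = a + 1 := by omega
  have e3 : (p * (p ^ f - 1)) / 2 = a * p := by
    rw [show p ^ f - 1 = 2*a from by omega]
    rw [show p * (2*a) = 2*(a*p) from by ring]
    omega
  have e4 : (p ^ f - 1) / 2 = a := by omega
  have e5 : (p ^ f - p) / 2 = a - b := by omega
  have e6 : (p - 1) / 2 = b := by omega
  have e7 : p ^ f + 1 = 2*a + 2 := by omega
  rw [e1, e2, e3, e4, e5, e6, e7]
  exact key_lemma p f a b (by omega) (by omega) hab
end

section
/- For f ≥ 1, let T_f be the set of tuples (k; e_1,…,e_k) where k ≥ 1 is odd, each e_j is a positive integer, e_1 + ⋯ + e_k = f, and, setting e_{k+j} := e_j for 1 ≤ j ≤ k, the alternating sums A_ℓ = e_1 − e_2 + e_3 − ⋯ ± e_ℓ are ≥ 0 for all even ℓ with 2 ≤ ℓ ≤ 2k. For a tuple in T_f define D = max{e_i − e_{i+1} + ⋯ + e_j : 2 ≤ i ≤ j ≤ k−1 with i and j even}, with the convention D = 0 when this index set is empty (in particular when k = 1). Then the maximum of D over all tuples in T_f equals ⌊f/3⌋. -/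
/-- The alternating sum `e_{ij} = e_i − e_{i+1} + e_{i+2} − ⋯ ± e_j`. -/
def altSum (e : ℕ → ℕ) (i j : ℕ) : ℤ :=
  ∑ ℓ ∈ Finset.Icc i j, (-1 : ℤ) ^ (ℓ - i) * (e ℓ : ℤ)

/-- The periodic extension of `e 1, …, e k` by `e (k + j) = e j`, used on indices
`1 ≤ j ≤ 2k`. -/
def extendE (e : ℕ → ℕ) (k : ℕ) (j : ℕ) : ℕ :=
  if j ≤ k then e j else e (j - k)

/-- `D = max{e_i − e_{i+1} + ⋯ + e_j : 2 ≤ i ≤ j ≤ k−1, i and j even}`, with the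
convention `D = 0` when the index set is empty (in particular when `k = 1`).
(The maximum, when the index set is nonempty, is positive, so computing it in `ℕ`
via truncation is harmless.) -/
def maxEvenAlt (e : ℕ → ℕ) (k : ℕ) : ℕ :=
  Finset.sup
    (((Finset.Icc 2 (k - 1)) ×ˢ (Finset.Icc 2 (k - 1))).filter
      fun ij => ij.1 ≤ ij.2 ∧ Even ij.1 ∧ Even ij.2)
    (fun ij => (altSum e ij.1 ij.2).toNat)

/-- The set `T_f`: tuples `(k; e 1, …, e k)` with `k ≥ 1` odd, `e j > 0`,
`e 1 + ⋯ + e k = f`, and all even partial alternating sums `A_ℓ ≥ 0` for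
`2 ≤ ℓ ≤ 2k` of the periodic extension of `e`. -/
def memTf (f k : ℕ) (e : ℕ → ℕ) : Prop :=
  Odd k ∧ 1 ≤ k ∧ (∀ j, 1 ≤ j → j ≤ k → 0 < e j) ∧
    (∑ j ∈ Finset.Icc 1 k, e j = f) ∧
    ∀ ℓ, Even ℓ → 2 ≤ ℓ → ℓ ≤ 2 * k → 0 ≤ altSum (extendE e k) 1 ℓ

lemma altSum_congr {e e' : ℕ → ℕ} {i j : ℕ} (h : ∀ ℓ, i ≤ ℓ → ℓ ≤ j → e ℓ = e' ℓ) :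
    altSum e i j = altSum e' i j := by
  unfold altSum
  refine Finset.sum_congr rfl fun ℓ hℓ => ?_
  rw [Finset.mem_Icc] at hℓ
  rw [h ℓ hℓ.1 hℓ.2]

lemma altSum_split (e : ℕ → ℕ) (i m j : ℕ) (h0 : 1 ≤ i) (h1 : i ≤ m + 1) (h2 : m ≤ j) :
    altSum e i j = altSum e i m + (-1 : ℤ) ^ (m + 1 - i) * altSum e (m + 1) j := by
  unfold altSum
  rw [show Finset.Icc i j = Finset.Ioc (i - 1) j by
        rw [← Finset.Icc_add_one_left_eq_Ioc]; congr 1; omega,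
      show Finset.Icc i m = Finset.Ioc (i - 1) m by
        rw [← Finset.Icc_add_one_left_eq_Ioc]; congr 1; omega,
      show Finset.Icc (m + 1) j = Finset.Ioc m j from Finset.Icc_add_one_left_eq_Ioc m j,
      ← Finset.sum_Ioc_consecutive _ (show i - 1 ≤ m by omega) h2,
      Finset.mul_sum]
  congr 1
  refine Finset.sum_congr rfl fun ℓ hℓ => ?_
  rw [Finset.mem_Ioc] at hℓ
  rw [← mul_assoc, ← pow_add]
  congr 2
  omega

lemma altSum_wrap (e : ℕ → ℕ) (k m : ℕ) (hk : Odd k) (hm1 : 1 ≤ m) (hmk : m ≤ k) :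
    altSum (extendE e k) 1 (k + m) = altSum e 1 k - altSum e 1 m := by
  have hk1 : 1 ≤ k := hk.pos
  rw [altSum_split (extendE e k) 1 k (k + m) le_rfl (by omega) (by omega)]
  have h1 : altSum (extendE e k) 1 k = altSum e 1 k :=
    altSum_congr fun ℓ _ hℓ => by simp [extendE, hℓ]
  have h2 : altSum (extendE e k) (k + 1) (k + m) = altSum e 1 m := by
    unfold altSum
    rw [← Finset.map_add_left_Icc 1 m k, Finset.sum_map]
    refine Finset.sum_congr rfl fun s hs => ?_
    rw [Finset.mem_Icc] at hs
    have h1 : ¬ (k + s ≤ k) := by omega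
    simp only [addLeftEmbedding_apply, extendE, if_neg h1]
    congr 2
    · omega
    · congr 1; omega
  rw [h1, h2, show k + 1 - 1 = k from rfl, Odd.neg_one_pow hk]
  ring

lemma key_bound {f k : ℕ} {e : ℕ → ℕ} (h : memTf f k e) {i j : ℕ} (hi : 2 ≤ i)
    (hj : j ≤ k - 1) (hij : i ≤ j) (hie : Even i) (hje : Even j) :
    3 * altSum e i j ≤ (f : ℤ) := by
  obtain ⟨hkodd, hk1, hpos, hsum, halt⟩ := h
  have hk3 : 3 ≤ k := by
    rcases hkodd with ⟨t, ht⟩; omega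
  -- A j = A (i-1) - S
  have hsplit := altSum_split e 1 (i - 1) j le_rfl (by omega) (by omega)
  have him1 : i - 1 + 1 = i := by omega
  rw [him1] at hsplit
  have hoddi : Odd (i - 1) := by
    rcases hie with ⟨t, ht⟩
    exact ⟨t - 1, by omega⟩
  rw [Odd.neg_one_pow hoddi] at hsplit
  -- agreement of altSum with extendE on [1, k]
  have hagree : ∀ n, n ≤ k → altSum (extendE e k) 1 n = altSum e 1 n := fun n hn =>
    altSum_congr fun ℓ _ hℓ => by simp [extendE, le_trans hℓ hn]
  -- A j ≥ 0
  have hAj : 0 ≤ altSum e 1 j := by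
    rw [← hagree j (by omega)]
    exact halt j hje (by omega) (by omega)
  -- A (i-1) ≤ A k
  have hAi : altSum e 1 (i - 1) ≤ altSum e 1 k := by
    have heven : Even (k + (i - 1)) := by
      rcases hkodd with ⟨t, ht⟩; rcases hie with ⟨s, hs⟩
      exact ⟨t + s, by omega⟩
    have := halt (k + (i - 1)) heven (by omega) (by omega)
    rw [altSum_wrap e k (i - 1) hkodd (by omega) (by omega)] at this
    omega
  -- S ≤ A k
  have hS1 : altSum e i j ≤ altSum e 1 k := by
    have : altSum e i j = altSum e 1 (i - 1) - altSum e 1 j := by linarith [hsplit]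
    omega
  -- E : sum over even indices
  set E : ℤ := ∑ ℓ ∈ (Finset.Icc 1 k).filter (fun ℓ => Even ℓ), (e ℓ : ℤ) with hE
  -- A k = f - 2 E
  have hAk : altSum e 1 k = (f : ℤ) - 2 * E := by
    have hf' : (f : ℤ) = ∑ ℓ ∈ Finset.Icc 1 k, (e ℓ : ℤ) := by
      rw [← hsum]; push_cast; rfl
    rw [hE, Finset.sum_filter, hf', altSum, Finset.mul_sum, ← Finset.sum_sub_distrib]
    refine Finset.sum_congr rfl fun ℓ hℓ => ?_
    rw [Finset.mem_Icc] at hℓ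
    by_cases he : Even ℓ
    · have : Odd (ℓ - 1) := by rcases he with ⟨t, ht⟩; exact ⟨t - 1, by omega⟩
      rw [if_pos he, Odd.neg_one_pow this]; ring
    · have : Even (ℓ - 1) := by
        rcases Nat.not_even_iff_odd.mp he with ⟨t, ht⟩
        exact ⟨t, by omega⟩
      rw [if_neg he, Even.neg_one_pow this]; ring
  -- S ≤ E
  have hS2 : altSum e i j ≤ E := by
    have step1 : altSum e i j ≤ ∑ ℓ ∈ (Finset.Icc i j).filter (fun ℓ => Even ℓ), (e ℓ : ℤ) := by
      rw [altSum, Finset.sum_filter]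
      refine Finset.sum_le_sum fun ℓ hℓ => ?_
      rw [Finset.mem_Icc] at hℓ
      by_cases he : Even ℓ
      · have : Even (ℓ - i) := by
          rcases he with ⟨t, ht⟩; rcases hie with ⟨s, hs⟩
          exact ⟨t - s, by omega⟩
        rw [if_pos he, Even.neg_one_pow this, one_mul]
      · have : Odd (ℓ - i) := by
          rcases Nat.not_even_iff_odd.mp he with ⟨t, ht⟩; rcases hie with ⟨s, hs⟩
          exact ⟨t - s, by omega⟩
        rw [if_neg he, Odd.neg_one_pow this]
        have : (0 : ℤ) ≤ (e ℓ : ℤ) := by positivity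
        nlinarith
    refine le_trans step1 ?_
    refine Finset.sum_le_sum_of_subset_of_nonneg ?_ (fun ℓ _ _ => by positivity)
    intro ℓ hℓ
    simp only [Finset.mem_filter, Finset.mem_Icc] at hℓ ⊢
    exact ⟨⟨by omega, by omega⟩, hℓ.2⟩
  linarith

/-- the maximum of `D` over all tuples in `T_f` equals `⌊f/3⌋`. -/
theorem max_sha_exponent_invariant (f : ℕ) (hf : 1 ≤ f) :
    (∀ k e, memTf f k e → maxEvenAlt e k ≤ f / 3) ∧
    (∃ k e, memTf f k e ∧ maxEvenAlt e k = f / 3) := by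
  constructor
  · intro k e h
    refine Finset.sup_le fun ij hij => ?_
    simp only [Finset.mem_filter, Finset.mem_product, Finset.mem_Icc] at hij
    obtain ⟨⟨⟨hi2, hi⟩, ⟨hj2, hj⟩⟩, hle, hie, hje⟩ := hij
    have := key_bound h hi2 hj hle hie hje
    omega
  · by_cases h3 : f < 3
    · refine ⟨1, fun _ => f, ⟨⟨0, rfl⟩, le_rfl, fun j _ _ => hf, by simp, ?_⟩, ?_⟩
      · intro ℓ hle h2 hk2
        have : ℓ = 2 := by omega
        subst this
        show (0:ℤ) ≤ ∑ ℓ ∈ Finset.Icc 1 2, (-1 : ℤ) ^ (ℓ - 1) * (extendE (fun _ => f) 1 ℓ : ℤ)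
        rw [show Finset.Icc 1 2 = {1, 2} from rfl]
        simp [extendE]
      · have : f / 3 = 0 := by omega
        rw [this, maxEvenAlt]
        simp
    · push_neg at h3
      set m := f / 3 with hm
      have hm1 : 1 ≤ m := by omega
      have h3m : 3 * m ≤ f := by omega
      set e : ℕ → ℕ := fun j => if j = 1 then m else if j = 2 then m else f - 2 * m with he
      refine ⟨3, e, ⟨⟨1, rfl⟩, by omega, ?_, ?_, ?_⟩, ?_⟩
      · intro j h1 h2
        simp only [he]
        split <;> [omega; skip]
        split <;> omega
      · rw [show Finset.Icc 1 3 = {1, 2, 3} from rfl]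
        simp [he]
        omega
      · intro ℓ hle h2 h6
        have hcase : ℓ = 2 ∨ ℓ = 4 ∨ ℓ = 6 := by
          rcases hle with ⟨t, ht⟩; omega
        have hex : ∀ s, 1 ≤ s → s ≤ 6 → (extendE e 3 s : ℤ) =
            if s % 3 = 2 then (m : ℤ) else if s % 3 = 1 then (m : ℤ) else (f : ℤ) - 2 * m := by
          intro s h1 h6'
          interval_cases s <;> simp [extendE, he] <;> omega
        rcases hcase with h | h | h <;> subst h <;> unfold altSum
        · rw [show Finset.Icc 1 2 = {1, 2} from rfl]
          rw [Finset.sum_insert (by decide), Finset.sum_singleton]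
          rw [hex 1 (by norm_num) (by norm_num), hex 2 (by norm_num) (by norm_num)]
          norm_num
        · rw [show Finset.Icc 1 4 = {1, 2, 3, 4} from rfl]
          rw [Finset.sum_insert (by decide), Finset.sum_insert (by decide),
            Finset.sum_insert (by decide), Finset.sum_singleton]
          rw [hex 1 (by norm_num) (by norm_num), hex 2 (by norm_num) (by norm_num),
            hex 3 (by norm_num) (by norm_num), hex 4 (by norm_num) (by norm_num)]
          norm_num
          omega
        · rw [show Finset.Icc 1 6 = {1, 2, 3, 4, 5, 6} from rfl]
          rw [Finset.sum_insert (by decide), Finset.sum_insert (by decide),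
            Finset.sum_insert (by decide), Finset.sum_insert (by decide),
            Finset.sum_insert (by decide), Finset.sum_singleton]
          rw [hex 1 (by norm_num) (by norm_num), hex 2 (by norm_num) (by norm_num),
            hex 3 (by norm_num) (by norm_num), hex 4 (by norm_num) (by norm_num),
            hex 5 (by norm_num) (by norm_num), hex 6 (by norm_num) (by norm_num)]
          norm_num
      · rw [maxEvenAlt]
        have hset : (((Finset.Icc 2 (3 - 1)) ×ˢ (Finset.Icc 2 (3 - 1))).filter
            fun ij => ij.1 ≤ ij.2 ∧ Even ij.1 ∧ Even ij.2) = {(2, 2)} := by decide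
        rw [hset, Finset.sup_singleton]
        have : altSum e 2 2 = (m : ℤ) := by
          rw [altSum, Finset.Icc_self, Finset.sum_singleton]
          simp [he]
        rw [this]
        simp
end
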